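/- arXiv:1608.02458 — 4 statements merged into one kernel-verified Lean document; each statement's English description precedes it below -/
import Mathlib

section
/- Let μ be a uniformly locally bounded signed Borel measure on ℝ. Then |μ| is form bounded with respect to the negative Laplacian with relative bound zero: for every c with 0 < c < 1 there exists γ ≥ 0 such that for all u in the Sobolev space W¹₂(ℝ) one has ∫_ℝ |u|² d|μ| ≤ c ‖u'‖²_{L²(ℝ)} + γ ‖u‖²_{L²(ℝ)}. In fact, for every δ ∈ (0,1) one has ∫_ℝ |u|² d|μ| ≤ 4δ‖μ‖_loc ‖u'‖²_{L²} + (4‖μ‖_loc/δ) ‖u‖²_{L²}. -/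
open MeasureTheory Filter Set Real
open scoped ENNReal

/-- A locally finite signed Borel measure on `ℝ`, represented as a formal
difference `pos - neg` of two nonnegative Borel measures. -/
structure SM where
  pos : Measure ℝ
  neg : Measure ℝ

/-- Local finiteness of both parts (i.e. the signed measure has locally finite
total variation). -/
def SM.LocFin (μ : SM) : Prop :=
  IsLocallyFiniteMeasure μ.pos ∧ IsLocallyFiniteMeasure μ.neg

/-- The total variation `|a - b|` of the formal difference of two measures,
using the lattice-theoretic subtraction of measures (Jordan decomposition). -/
noncomputable def tvSub (a b : Measure ℝ) : Measure ℝ := (a - b) + (b - a)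

/-- The total variation measure `|μ|` of a signed measure. -/
noncomputable def SM.tv (μ : SM) : Measure ℝ := tvSub μ.pos μ.neg

/-- The total variation `|μ₁ - μ₂|` of the difference of two signed measures. -/
noncomputable def tvDiff (μ₁ μ₂ : SM) : Measure ℝ :=
  tvSub (μ₁.pos + μ₂.neg) (μ₂.pos + μ₁.neg)

/-- `‖ν‖_loc = sup_x ν([x, x+1])`. -/
noncomputable def normLoc (ν : Measure ℝ) : ℝ≥0∞ := ⨆ x : ℝ, ν (Set.Icc x (x + 1))

/-- A measure is uniformly locally bounded if `sup_x ν([x,x+1]) < ∞`. -/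
def UnifLocBounded (ν : Measure ℝ) : Prop := normLoc ν < ⊤

/-- `μ` is `p`-periodic: `μ(· + p) = μ`. -/
def SM.IsPeriodic (μ : SM) (p : ℝ) : Prop :=
  Measure.map (fun x => x + p) μ.pos = μ.pos ∧ Measure.map (fun x => x + p) μ.neg = μ.neg

/-- `I_x = [min(x,0), max(x,0)]`. -/
def Ix (x : ℝ) : Set ℝ := Set.Icc (min x 0) (max x 0)

/-- The integral `∫_A f dμ` of `f` over `A` against the signed measure `μ`. -/
noncomputable def SM.integOn (μ : SM) (f : ℝ → ℝ) (A : Set ℝ) : ℝ :=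
  (∫ t in A, f t ∂μ.pos) - (∫ t in A, f t ∂μ.neg)

/-- `∫_0^x f dμ := ∫_{[0,x]} f dμ` for `x ≥ 0` and `:= -∫_{(x,0)} f dμ` for `x < 0`. -/
noncomputable def intRight (μ : SM) (f : ℝ → ℝ) (x : ℝ) : ℝ :=
  if 0 ≤ x then μ.integOn f (Set.Icc 0 x) else - μ.integOn f (Set.Ioo x 0)

/-- `(u, v)` is a solution of `-u'' + u μ = E u`: `u` is locally absolutely
continuous with `u(x) = u(0) + ∫_0^x v`, and
`v(x) = v(0) + ∫_0^x u dμ - E ∫_0^x u` (`v` is the right limit `u'(·+)`). -/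
structure IsSolution (μ : SM) (E : ℝ) (u v : ℝ → ℝ) : Prop where
  locInt : LocallyIntegrable v volume
  u_eq : ∀ x : ℝ, u x = u 0 + ∫ t in (0:ℝ)..x, v t
  v_eq : ∀ x : ℝ, v x = v 0 + intRight μ u x - E * ∫ t in (0:ℝ)..x, u t

/-- The total variation measure `|μ - E λ|`, `λ` Lebesgue measure. -/
noncomputable def tvWithE (μ : SM) (E : ℝ) : Measure ℝ :=
  tvSub (μ.pos + ENNReal.ofReal (-E) • volume) (μ.neg + ENNReal.ofReal E • volume)

/-- Membership in the Sobolev space `W¹₂(ℝ)` (continuous representative `u`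
with derivative `d`): `u, d ∈ L²` and `u(x) = u(0) + ∫_0^x d`. -/
def IsW12 (u d : ℝ → ℝ) : Prop :=
  MemLp u 2 volume ∧ MemLp d 2 volume ∧ ∀ x : ℝ, u x = u 0 + ∫ t in (0:ℝ)..x, d t

/-- Addition of signed measures. -/
noncomputable def SM.add (a b : SM) : SM := ⟨a.pos + b.pos, a.neg + b.neg⟩

/-- The translate `T_x μ = μ(· - x)`. -/
noncomputable def SM.translate (μ : SM) (x : ℝ) : SM :=
  ⟨Measure.map (fun y => y + x) μ.pos, Measure.map (fun y => y + x) μ.neg⟩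

/-- The scaled measure `μ ∘ β`, `(μ ∘ β)(A) = μ(β A)`. -/
noncomputable def SM.scale (μ : SM) (β : ℝ) : SM :=
  ⟨Measure.map (fun y => y / β) μ.pos, Measure.map (fun y => y / β) μ.neg⟩

/-- `μ` is a Gordon measure. -/
def IsGordon (μ : SM) : Prop :=
  μ.LocFin ∧ UnifLocBounded μ.tv ∧
  ∃ (μs : ℕ → SM) (p : ℕ → ℝ),
    (∀ m, 0 < p m) ∧ (∀ m, (μs m).LocFin) ∧ (∀ m, (μs m).IsPeriodic (p m)) ∧
    (∀ m, UnifLocBounded (μs m).tv) ∧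
    (∃ M : ℝ≥0∞, M < ⊤ ∧ ∀ m, normLoc (μs m).tv ≤ M) ∧
    Filter.Tendsto p Filter.atTop Filter.atTop ∧
    ∀ C : ℝ, Filter.Tendsto
      (fun m => Real.exp (C * p m) * ((tvDiff μ (μs m)) (Set.Icc (-(p m)) (2 * p m))).toReal)
      Filter.atTop (nhds 0)


section FormBoundedHelpers

open MeasureTheory Set Real
open scoped ENNReal

private lemma fb_cs_bound {d : ℝ → ℝ} (hd : MemLp d 2 volume) (a b : ℝ) (hab : a ≤ b) :
    (∫ t in Set.Icc a b, |d t|) ^ 2 ≤ (b - a) * ∫ t in Set.Icc a b, (d t) ^ 2 := by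
  set ν := volume.restrict (Set.Icc a b) with hν
  haveI : IsFiniteMeasure ν := ⟨by
    rw [hν, Measure.restrict_apply_univ, Real.volume_Icc]; exact ENNReal.ofReal_lt_top⟩
  have hpq : (2:ℝ).HolderConjugate 2 := ⟨by norm_num, by norm_num, by norm_num⟩
  have hf : MemLp (fun t => |d t|) (ENNReal.ofReal (2:ℝ)) ν := by
    have h2 : MemLp d 2 ν := hd.restrict _
    have := h2.norm
    simpa [Real.norm_eq_abs, ENNReal.ofReal_ofNat] using this
  have hg : MemLp (fun _ : ℝ => (1:ℝ)) (ENNReal.ofReal (2:ℝ)) ν := memLp_const 1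
  have H := integral_mul_le_Lp_mul_Lq_of_nonneg hpq
    (Filter.Eventually.of_forall fun t => abs_nonneg (d t))
    (Filter.Eventually.of_forall fun _ => zero_le_one) hf hg
  simp only [mul_one] at H
  have hBeq : ∫ t, (1:ℝ) ^ (2:ℝ) ∂ν = b - a := by
    simp [hν, Real.volume_Icc, ENNReal.toReal_ofReal (by linarith : (0:ℝ) ≤ b - a), hab]
  have hAeq : ∫ t, |d t| ^ (2:ℝ) ∂ν = ∫ t in Set.Icc a b, (d t) ^ 2 := by
    rw [hν]
    refine setIntegral_congr_fun measurableSet_Icc fun t _ => ?_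
    rw [show ((2:ℝ)) = ((2:ℕ):ℝ) by norm_num, Real.rpow_natCast, sq_abs]
  rw [hAeq, hBeq] at H
  have hA : 0 ≤ ∫ t in Set.Icc a b, (d t) ^ 2 :=
    setIntegral_nonneg measurableSet_Icc fun t _ => sq_nonneg _
  have hL : 0 ≤ ∫ t in Set.Icc a b, |d t| :=
    setIntegral_nonneg measurableSet_Icc fun t _ => abs_nonneg _
  set A := ∫ t in Set.Icc a b, (d t) ^ 2
  set L := ∫ t in Set.Icc a b, |d t|
  have hR : A ^ (1/2:ℝ) * (b-a) ^ (1/2:ℝ) = (A * (b-a)) ^ (1/2:ℝ) :=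
    (Real.mul_rpow hA (by linarith)).symm
  have hineq : L ≤ (A * (b-a)) ^ (1/2:ℝ) := by rw [← hR]; exact H
  have hsq : ((A * (b-a)) ^ (1/2:ℝ)) ^ 2 = A * (b-a) := by
    rw [← Real.rpow_natCast ((A * (b-a)) ^ (1/2:ℝ)) 2,
      ← Real.rpow_mul (mul_nonneg hA (by linarith : (0:ℝ) ≤ b - a))]
    norm_num
  calc L ^ 2 ≤ ((A * (b-a)) ^ (1/2:ℝ)) ^ 2 := by
        apply pow_le_pow_left₀ hL hineq
    _ = A * (b-a) := hsq
    _ = (b - a) * A := mul_comm _ _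

private lemma fb_sup_bound {u d : ℝ → ℝ} (hu : Continuous u) (hd : MemLp d 2 volume)
    (hud : ∀ x y : ℝ, u x - u y = ∫ t in y..x, d t) {δ : ℝ} (hδ : 0 < δ) (a : ℝ)
    {x : ℝ} (hx : x ∈ Set.Icc a (a + δ)) :
    u x ^ 2 ≤ (2/δ) * (∫ t in Set.Icc a (a+δ), u t ^ 2)
      + (2*δ) * ∫ t in Set.Icc a (a+δ), d t ^ 2 := by
  have hab : a ≤ a + δ := by linarith
  set I := Set.Icc a (a + δ) with hI
  set C := ∫ t in I, d t ^ 2 with hC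
  have hCnn : 0 ≤ C := setIntegral_nonneg measurableSet_Icc fun t _ => sq_nonneg _
  have hdloc : LocallyIntegrable d volume := hd.locallyIntegrable (by norm_num)
  have hdI : IntegrableOn (fun t => |d t|) I volume :=
    (hdloc.integrableOn_isCompact isCompact_Icc).norm
  have hcs : (∫ t in I, |d t|) ^ 2 ≤ δ * C := by
    have := fb_cs_bound hd a (a + δ) hab
    simpa [hI, hC] using this
  have step1 : ∀ y ∈ I, u x ^ 2 ≤ 2 * u y ^ 2 + 2 * (δ * C) := by
    intro y hy
    have hsub : Set.uIoc y x ⊆ I := fun t ht =>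
      ⟨le_trans (le_min hy.1 hx.1) (le_of_lt ht.1), le_trans ht.2 (max_le hy.2 hx.2)⟩
    have hb1 : |u x - u y| ≤ ∫ t in I, |d t| := by
      rw [hud x y]
      refine le_trans ?_ (setIntegral_mono_set hdI
        (Filter.Eventually.of_forall fun t => abs_nonneg (d t))
        (HasSubset.Subset.eventuallyLE hsub))
      simpa [Real.norm_eq_abs] using
        intervalIntegral.norm_integral_le_integral_norm_uIoc (f := d) (a := y) (b := x)
        (μ := volume)
    have hb2 : (u x - u y) ^ 2 ≤ δ * C := by
      calc (u x - u y) ^ 2 = |u x - u y| ^ 2 := (sq_abs _).symm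
        _ ≤ (∫ t in I, |d t|) ^ 2 := pow_le_pow_left₀ (abs_nonneg _) hb1 2
        _ ≤ δ * C := hcs
    nlinarith [sq_nonneg (2 * u y - u x)]
  have hu2I : IntegrableOn (fun y => u y ^ 2) I volume :=
    ((hu.pow 2).continuousOn).integrableOn_compact isCompact_Icc
  have hvolI : volume I < ⊤ := by rw [hI, Real.volume_Icc]; exact ENNReal.ofReal_lt_top
  have hint : ∫ y in I, u x ^ 2 ≤ ∫ y in I, (2 * u y ^ 2 + 2 * (δ * C)) :=
    setIntegral_mono_on (integrableOn_const hvolI.ne)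
      ((hu2I.const_mul 2).add (integrableOn_const hvolI.ne)) measurableSet_Icc step1
  have hvol : (volume I).toReal = δ := by
    rw [hI, Real.volume_Icc, ENNReal.toReal_ofReal (by linarith)]; ring
  rw [setIntegral_const, integral_add (hu2I.const_mul 2)
    (integrableOn_const hvolI.ne), setIntegral_const, integral_const_mul] at hint
  simp only [smul_eq_mul, measureReal_def, hvol] at hint
  set U := ∫ y in I, u y ^ 2 with hU
  have h2 : u x ^ 2 ≤ (2 * U + δ * (2 * (δ * C))) / δ := by
    rw [le_div_iff₀ hδ]; nlinarith [hint]
  have h3 : (2 * U + δ * (2 * (δ * C))) / δ = 2/δ * U + 2*δ*C := by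
    field_simp
  rw [h3] at h2
  simpa [hI, hC, hU] using h2

private lemma fb_cover {δ : ℝ} (hδ0 : 0 < δ) :
    (⋃ n : ℤ, Set.Ico ((n:ℝ)*δ) ((n:ℝ)*δ + δ)) = Set.univ := by
  ext x
  simp only [Set.mem_iUnion, Set.mem_Ico, Set.mem_univ, iff_true]
  refine ⟨⌊x / δ⌋, ?_, ?_⟩
  · calc (⌊x/δ⌋ : ℝ) * δ ≤ x/δ * δ := by
          have := Int.floor_le (x/δ); nlinarith
      _ = x := by field_simp
  · have h := Int.lt_floor_add_one (x/δ)
    have h2 : x/δ * δ < ((⌊x/δ⌋:ℝ) + 1) * δ := by nlinarith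
    calc x = x/δ * δ := by field_simp
      _ < ((⌊x/δ⌋:ℝ) + 1) * δ := h2
      _ = (⌊x/δ⌋:ℝ) * δ + δ := by ring

private lemma fb_disj {δ : ℝ} (hδ0 : 0 < δ) :
    Pairwise (Function.onFun Disjoint fun n : ℤ => Set.Ico ((n:ℝ)*δ) ((n:ℝ)*δ + δ)) := by
  intro m n hmn
  rw [Function.onFun, Set.Ico_disjoint_Ico]
  rcases lt_or_gt_of_ne hmn with h | h
  · have : (m:ℝ) + 1 ≤ n := by exact_mod_cast h
    refine le_trans (min_le_left _ _) (le_trans ?_ (le_max_right _ _))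
    nlinarith
  · have : (n:ℝ) + 1 ≤ m := by exact_mod_cast h
    refine le_trans (min_le_right _ _) (le_trans ?_ (le_max_left _ _))
    nlinarith

private lemma fb_partition_tsum {δ : ℝ} (hδ0 : 0 < δ) {f : ℝ → ℝ} (hf : Integrable f volume)
    (hnn : ∀ x, 0 ≤ f x) :
    ∑' n : ℤ, ENNReal.ofReal (∫ t in Set.Icc ((n:ℝ)*δ) ((n:ℝ)*δ + δ), f t) =
      ENNReal.ofReal (∫ x, f x) := by
  have h1 : ∀ n : ℤ, ENNReal.ofReal (∫ t in Set.Icc ((n:ℝ)*δ) ((n:ℝ)*δ + δ), f t) =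
      ∫⁻ t in Set.Ico ((n:ℝ)*δ) ((n:ℝ)*δ + δ), ENNReal.ofReal (f t) := by
    intro n
    rw [ofReal_integral_eq_lintegral_ofReal hf.integrableOn
      (Filter.Eventually.of_forall hnn)]
    exact (setLIntegral_congr Ico_ae_eq_Icc).symm
  simp_rw [h1]
  rw [← lintegral_iUnion (fun n => measurableSet_Ico) (fb_disj hδ0), fb_cover hδ0,
    Measure.restrict_univ,
    ← ofReal_integral_eq_lintegral_ofReal hf (Filter.Eventually.of_forall hnn)]

private lemma fb_main (ν : Measure ℝ) {δ : ℝ} (hδ0 : 0 < δ) (hδ1 : δ < 1)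
    {u d : ℝ → ℝ} (hu : MemLp u 2 volume) (hd : MemLp d 2 volume)
    (hrep : ∀ x : ℝ, u x = u 0 + ∫ t in (0:ℝ)..x, d t) :
    ∫⁻ x, ENNReal.ofReal (u x ^ 2) ∂ν ≤
      (ENNReal.ofReal (2/δ) * ENNReal.ofReal (∫ x, u x ^ 2)
        + ENNReal.ofReal (2*δ) * ENNReal.ofReal (∫ x, d x ^ 2)) * normLoc ν := by
  have hdloc : LocallyIntegrable d volume := hd.locallyIntegrable (by norm_num)
  have hII : ∀ a b : ℝ, IntervalIntegrable d volume a b := fun a b =>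
    (hdloc.integrableOn_isCompact isCompact_uIcc).intervalIntegrable
  have hucont : Continuous u :=
    (continuous_const.add (intervalIntegral.continuous_primitive hII 0)).congr
      fun x => (hrep x).symm
  have hud : ∀ x y : ℝ, u x - u y = ∫ t in y..x, d t := by
    intro x y
    rw [hrep x, hrep y]
    have := intervalIntegral.integral_interval_sub_left (hII 0 x) (hII 0 y)
    rw [← this]; ring
  have hu2 : Integrable (fun x => u x ^ 2) volume := hu.integrable_sq
  have hd2 : Integrable (fun x => d x ^ 2) volume := hd.integrable_sq
  set s : ℤ → Set ℝ := fun n => Set.Ico ((n:ℝ)*δ) ((n:ℝ)*δ + δ) with hs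
  set A : ℤ → ℝ := fun n => ∫ t in Set.Icc ((n:ℝ)*δ) ((n:ℝ)*δ + δ), u t ^ 2 with hA
  set B : ℤ → ℝ := fun n => ∫ t in Set.Icc ((n:ℝ)*δ) ((n:ℝ)*δ + δ), d t ^ 2 with hB
  have hAnn : ∀ n, 0 ≤ A n := fun n =>
    setIntegral_nonneg measurableSet_Icc fun t _ => sq_nonneg _
  have hBnn : ∀ n, 0 ≤ B n := fun n =>
    setIntegral_nonneg measurableSet_Icc fun t _ => sq_nonneg _
  have hdec : ∫⁻ x, ENNReal.ofReal (u x ^ 2) ∂ν =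
      ∑' n : ℤ, ∫⁻ x in s n, ENNReal.ofReal (u x ^ 2) ∂ν := by
    rw [← lintegral_iUnion (fun n => measurableSet_Ico) (fb_disj hδ0),
      fb_cover hδ0, Measure.restrict_univ]
  have hterm : ∀ n : ℤ, ∫⁻ x in s n, ENNReal.ofReal (u x ^ 2) ∂ν ≤
      (ENNReal.ofReal (2/δ * A n) + ENNReal.ofReal (2*δ * B n)) * normLoc ν := by
    intro n
    have hsup : ∀ x ∈ s n, ENNReal.ofReal (u x ^ 2) ≤
        ENNReal.ofReal (2/δ * A n + 2*δ * B n) := by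
      intro x hx
      apply ENNReal.ofReal_le_ofReal
      have hx' : x ∈ Set.Icc ((n:ℝ)*δ) ((n:ℝ)*δ + δ) := Set.Ico_subset_Icc_self hx
      exact fb_sup_bound hucont hd hud hδ0 ((n:ℝ)*δ) hx'
    calc ∫⁻ x in s n, ENNReal.ofReal (u x ^ 2) ∂ν
        ≤ ∫⁻ _ in s n, ENNReal.ofReal (2/δ * A n + 2*δ * B n) ∂ν := by
          refine lintegral_mono_ae ?_
          filter_upwards [ae_restrict_mem measurableSet_Ico] with x hx
          exact hsup x hx
      _ = ENNReal.ofReal (2/δ * A n + 2*δ * B n) * ν (s n) := by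
          rw [setLIntegral_const]
      _ ≤ (ENNReal.ofReal (2/δ * A n) + ENNReal.ofReal (2*δ * B n)) * normLoc ν := by
          refine mul_le_mul' (le_of_eq ?_) ?_
          · exact ENNReal.ofReal_add (by positivity) (by positivity)
          · refine le_trans (measure_mono ?_) (le_iSup (fun x => ν (Set.Icc x (x+1))) ((n:ℝ)*δ))
            intro x hx
            exact ⟨hx.1, le_trans (le_of_lt hx.2) (by linarith)⟩
  calc ∫⁻ x, ENNReal.ofReal (u x ^ 2) ∂ν
      = ∑' n : ℤ, ∫⁻ x in s n, ENNReal.ofReal (u x ^ 2) ∂ν := hdec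
    _ ≤ ∑' n : ℤ, (ENNReal.ofReal (2/δ * A n) + ENNReal.ofReal (2*δ * B n)) * normLoc ν :=
        ENNReal.tsum_le_tsum hterm
    _ = (∑' n : ℤ, (ENNReal.ofReal (2/δ * A n) + ENNReal.ofReal (2*δ * B n))) * normLoc ν :=
        ENNReal.tsum_mul_right
    _ = (ENNReal.ofReal (2/δ) * ENNReal.ofReal (∫ x, u x ^ 2)
        + ENNReal.ofReal (2*δ) * ENNReal.ofReal (∫ x, d x ^ 2)) * normLoc ν := by
        congr 1
        rw [ENNReal.tsum_add]
        congr 1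
        · have : ∀ n : ℤ, ENNReal.ofReal (2/δ * A n) =
              ENNReal.ofReal (2/δ) * ENNReal.ofReal (A n) := fun n =>
            ENNReal.ofReal_mul (by positivity)
          simp_rw [this]
          rw [ENNReal.tsum_mul_left, fb_partition_tsum hδ0 hu2 (fun x => sq_nonneg _)]
        · have : ∀ n : ℤ, ENNReal.ofReal (2*δ * B n) =
              ENNReal.ofReal (2*δ) * ENNReal.ofReal (B n) := fun n =>
            ENNReal.ofReal_mul (by positivity)
          simp_rw [this]
          rw [ENNReal.tsum_mul_left, fb_partition_tsum hδ0 hd2 (fun x => sq_nonneg _)]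

end FormBoundedHelpers

/-- For a uniformly locally bounded signed Borel measure `μ`,
`|μ|` is `-Δ`-form bounded with relative bound zero: for every `0 < c < 1`
there is `γ ≥ 0` with `∫ |u|² d|μ| ≤ c ‖u'‖₂² + γ ‖u‖₂²` on `W¹₂(ℝ)`; in fact
for every `δ ∈ (0,1)`,
`∫ |u|² d|μ| ≤ 4δ‖μ‖_loc ‖u'‖₂² + (4‖μ‖_loc/δ) ‖u‖₂²`. -/


theorem formBounded_of_unifLocBounded (μ : SM) (hloc : μ.LocFin)
    (hub : UnifLocBounded μ.tv) :
    (∀ c : ℝ, 0 < c → c < 1 → ∃ γ : ℝ, 0 ≤ γ ∧ ∀ u d : ℝ → ℝ, IsW12 u d →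
      ∫⁻ x, ENNReal.ofReal ((u x) ^ 2) ∂μ.tv ≤
        ENNReal.ofReal (c * (∫ x, (d x) ^ 2) + γ * ∫ x, (u x) ^ 2)) ∧
    (∀ δ : ℝ, 0 < δ → δ < 1 → ∀ u d : ℝ → ℝ, IsW12 u d →
      ∫⁻ x, ENNReal.ofReal ((u x) ^ 2) ∂μ.tv ≤
        ENNReal.ofReal (4 * δ * (normLoc μ.tv).toReal * (∫ x, (d x) ^ 2)
          + (4 * (normLoc μ.tv).toReal / δ) * ∫ x, (u x) ^ 2)) := by
  set ν := μ.tv with hνdef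
  set Mt := (normLoc ν).toReal with hMt
  have hMfin : normLoc ν ≠ ⊤ := ne_of_lt hub
  have hMeq : normLoc ν = ENNReal.ofReal Mt := (ENNReal.ofReal_toReal hMfin).symm
  have hMtnn : 0 ≤ Mt := ENNReal.toReal_nonneg
  have P2 : ∀ δ : ℝ, 0 < δ → δ < 1 → ∀ u d : ℝ → ℝ, IsW12 u d →
      ∫⁻ x, ENNReal.ofReal ((u x) ^ 2) ∂ν ≤
        ENNReal.ofReal (4 * δ * Mt * (∫ x, (d x) ^ 2) + (4 * Mt / δ) * ∫ x, (u x) ^ 2) := by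
    intro δ hδ0 hδ1 u d hW
    obtain ⟨hu, hd, hrep⟩ := hW
    have hU : 0 ≤ ∫ x, (u x) ^ 2 := integral_nonneg fun x => sq_nonneg _
    have hD : 0 ≤ ∫ x, (d x) ^ 2 := integral_nonneg fun x => sq_nonneg _
    set U := ∫ x, (u x) ^ 2
    set D := ∫ x, (d x) ^ 2
    calc ∫⁻ x, ENNReal.ofReal ((u x) ^ 2) ∂ν
        ≤ (ENNReal.ofReal (2/δ) * ENNReal.ofReal U
            + ENNReal.ofReal (2*δ) * ENNReal.ofReal D) * normLoc ν :=
          fb_main ν hδ0 hδ1 hu hd hrep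
      _ = ENNReal.ofReal ((2/δ * U + 2*δ * D) * Mt) := by
          rw [hMeq, ← ENNReal.ofReal_mul (by positivity), ← ENNReal.ofReal_mul (by positivity),
            ← ENNReal.ofReal_add (by positivity) (by positivity),
            ← ENNReal.ofReal_mul (by positivity)]
      _ ≤ ENNReal.ofReal (4 * δ * Mt * D + (4 * Mt / δ) * U) := by
          apply ENNReal.ofReal_le_ofReal
          have e1 : (2/δ * U + 2*δ * D) * Mt = 2*(Mt/δ*U) + 2*(δ*Mt*D) := by ring
          have e2 : 4 * δ * Mt * D + (4 * Mt / δ) * U = 4*(δ*Mt*D) + 4*(Mt/δ*U) := by ring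
          have hx : 0 ≤ Mt/δ*U := by positivity
          have hy : 0 ≤ δ*Mt*D := by positivity
          linarith
  refine ⟨?_, P2⟩
  intro c hc0 hc1
  set δ := min (1/2) (c / (4*Mt+1)) with hδdef
  have hδ0 : 0 < δ := lt_min (by norm_num) (by positivity)
  have hδ1 : δ < 1 := lt_of_le_of_lt (min_le_left _ _) (by norm_num)
  refine ⟨4 * Mt / δ, by positivity, ?_⟩
  intro u d hW
  have hU : 0 ≤ ∫ x, (u x) ^ 2 := integral_nonneg fun x => sq_nonneg _
  have hD : 0 ≤ ∫ x, (d x) ^ 2 := integral_nonneg fun x => sq_nonneg _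
  refine le_trans (P2 δ hδ0 hδ1 u d hW) (ENNReal.ofReal_le_ofReal ?_)
  have hkey : 4 * δ * Mt ≤ c := by
    have h1 : δ ≤ c / (4*Mt+1) := min_le_right _ _
    have h2 : 4 * δ * Mt ≤ 4 * (c / (4*Mt+1)) * Mt := by nlinarith
    have h3 : 4 * (c / (4*Mt+1)) * Mt ≤ c := by
      have hpos : (0:ℝ) < 4*Mt+1 := by positivity
      have hfrac : 4*Mt/(4*Mt+1) ≤ 1 := (div_le_one hpos).mpr (by linarith)
      have e : 4 * (c / (4*Mt+1)) * Mt = c * (4*Mt/(4*Mt+1)) := by ring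
      rw [e]
      calc c * (4*Mt/(4*Mt+1)) ≤ c * 1 := mul_le_mul_of_nonneg_left hfrac hc0.le
        _ = c := mul_one c
    linarith
  have : 4 * δ * Mt * (∫ x, (d x) ^ 2) ≤ c * (∫ x, (d x) ^ 2) := by
    apply mul_le_mul_of_nonneg_right hkey hD
  linarith
end

section
/- Let μ₁ be a locally bounded p-periodic signed Borel measure on ℝ (i.e. μ₁(·+p) = μ₁), E ∈ ℝ, and let (u₁,v₁) be a solution of −u'' + uμ₁ = Eu. Then there exists C ≥ 0 such that |u₁(x)| ≤ C e^{C|x|} for all x ∈ ℝ. The constant C can be chosen depending only on E, ‖μ₁‖_loc, ‖μ₁ − Eλ‖_loc and the initial data (u₁(0), v₁(0)). -/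
open MeasureTheory Filter Set Real
open scoped ENNReal

lemma key_tv (p n : Measure ℝ) {G A : Set ℝ} (hG : MeasurableSet G) (hA : MeasurableSet A)
    (hAG : A ⊆ G) (hPfin : IsFiniteMeasure (p.restrict G)) (hNfin : IsFiniteMeasure (n.restrict G))
    {f : ℝ → ℝ} (hip : IntegrableOn f A p) (hin : IntegrableOn f A n)
    {S : ℝ} (hS0 : 0 ≤ S) (hS : ∀ x ∈ A, |f x| ≤ S) :
    |(∫ x in A, f x ∂p) - ∫ x in A, f x ∂n| ≤ S * ((tvSub p n) A).toReal := by
  set P := p.restrict G with hP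
  set N := n.restrict G with hN
  haveI := hPfin
  haveI := hNfin
  obtain ⟨s, hs, hs1, hs2⟩ := hahn_decomposition (μ := P) (ν := N)
  set A₁ := A ∩ s with hA₁def
  set A₂ := A \ s with hA₂def
  have hA₁ : MeasurableSet A₁ := hA.inter hs
  have hA₂ : MeasurableSet A₂ := hA.diff hs
  have hA₁A : A₁ ⊆ A := inter_subset_left
  have hA₂A : A₂ ⊆ A := diff_subset
  have hres : ∀ (m : Measure ℝ) (W : Set ℝ), W ⊆ G → MeasurableSet W →
      (m.restrict G).restrict W = m.restrict W := by
    intro m W hWG hW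
    rw [Measure.restrict_restrict hW, Set.inter_eq_self_of_subset_left hWG]
  have ePA₁ : P.restrict A₁ = p.restrict A₁ := hres p A₁ (hA₁A.trans hAG) hA₁
  have eNA₁ : N.restrict A₁ = n.restrict A₁ := hres n A₁ (hA₁A.trans hAG) hA₁
  have ePA₂ : P.restrict A₂ = p.restrict A₂ := hres p A₂ (hA₂A.trans hAG) hA₂
  have eNA₂ : N.restrict A₂ = n.restrict A₂ := hres n A₂ (hA₂A.trans hAG) hA₂
  have h1 : N.restrict A₁ ≤ P.restrict A₁ := by
    rw [Measure.le_iff]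
    intro t ht
    rw [Measure.restrict_apply ht, Measure.restrict_apply ht]
    exact hs1 _ (ht.inter hA₁) (fun x hx => hx.2.2)
  have h2 : P.restrict A₂ ≤ N.restrict A₂ := by
    rw [Measure.le_iff]
    intro t ht
    rw [Measure.restrict_apply ht, Measure.restrict_apply ht]
    exact hs2 _ (ht.inter hA₂) (fun x hx => hx.2.2)
  set δ₁ := P.restrict A₁ - N.restrict A₁ with hδ₁def
  set δ₂ := N.restrict A₂ - P.restrict A₂ with hδ₂def
  have hδ₁ : δ₁ + N.restrict A₁ = P.restrict A₁ := Measure.sub_add_cancel_of_le h1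
  have hδ₂ : δ₂ + P.restrict A₂ = N.restrict A₂ := Measure.sub_add_cancel_of_le h2
  have hip1 : IntegrableOn f A₁ p := hip.mono_set hA₁A
  have hin1 : IntegrableOn f A₁ n := hin.mono_set hA₁A
  have hip2 : IntegrableOn f A₂ p := hip.mono_set hA₂A
  have hin2 : IntegrableOn f A₂ n := hin.mono_set hA₂A
  have hδ₁le : δ₁ ≤ p.restrict A₁ := by rw [← ePA₁]; exact Measure.sub_le
  have hδ₂le : δ₂ ≤ n.restrict A₂ := by rw [← eNA₂]; exact Measure.sub_le
  have hδ₁i : Integrable f δ₁ := Integrable.mono_measure hip1 hδ₁le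
  have hδ₂i : Integrable f δ₂ := Integrable.mono_measure hin2 hδ₂le
  -- split the integrals
  have hsplit_p : ∫ x in A, f x ∂p = (∫ x in A₁, f x ∂p) + ∫ x in A₂, f x ∂p :=
    (integral_inter_add_diff hs hip).symm
  have hsplit_n : ∫ x in A, f x ∂n = (∫ x in A₁, f x ∂n) + ∫ x in A₂, f x ∂n :=
    (integral_inter_add_diff hs hin).symm
  -- term 1
  have T1 : (∫ x in A₁, f x ∂p) - ∫ x in A₁, f x ∂n = ∫ x, f x ∂δ₁ := by
    have : ∫ x in A₁, f x ∂p = (∫ x, f x ∂δ₁) + ∫ x in A₁, f x ∂n := by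
      have e : p.restrict A₁ = δ₁ + n.restrict A₁ := by rw [← eNA₁, hδ₁, ePA₁]
      calc ∫ x in A₁, f x ∂p = ∫ x, f x ∂(δ₁ + n.restrict A₁) := by rw [← e]
        _ = (∫ x, f x ∂δ₁) + ∫ x in A₁, f x ∂n := integral_add_measure hδ₁i hin1
    linarith
  have T2 : (∫ x in A₂, f x ∂p) - ∫ x in A₂, f x ∂n = -∫ x, f x ∂δ₂ := by
    have : ∫ x in A₂, f x ∂n = (∫ x, f x ∂δ₂) + ∫ x in A₂, f x ∂p := by
      have e : n.restrict A₂ = δ₂ + p.restrict A₂ := by rw [← ePA₂, hδ₂, eNA₂]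
      calc ∫ x in A₂, f x ∂n = ∫ x, f x ∂(δ₂ + p.restrict A₂) := by rw [← e]
        _ = (∫ x, f x ∂δ₂) + ∫ x in A₂, f x ∂p := integral_add_measure hδ₂i hip2
    linarith
  -- finiteness and identification of total variation
  have ePN : P - N = (p - n).restrict G := (Measure.restrict_sub_eq_restrict_sub_restrict hG).symm
  have eNP : N - P = (n - p).restrict G := (Measure.restrict_sub_eq_restrict_sub_restrict hG).symm
  have hpnA : (p - n) A ≤ P Set.univ := by
    calc (p - n) A = ((p - n).restrict G) A := by
          rw [Measure.restrict_apply hA, Set.inter_eq_self_of_subset_left hAG]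
      _ = (P - N) A := by rw [ePN]
      _ ≤ P A := Measure.le_iff'.1 Measure.sub_le A
      _ ≤ P Set.univ := measure_mono (subset_univ A)
  have hnpA : (n - p) A ≤ N Set.univ := by
    calc (n - p) A = ((n - p).restrict G) A := by
          rw [Measure.restrict_apply hA, Set.inter_eq_self_of_subset_left hAG]
      _ = (N - P) A := by rw [eNP]
      _ ≤ N A := Measure.le_iff'.1 Measure.sub_le A
      _ ≤ N Set.univ := measure_mono (subset_univ A)
  have hδ₁u : δ₁ Set.univ ≤ (p - n) A := by
    have e1 : δ₁ = (P - N).restrict A₁ :=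
      (Measure.restrict_sub_eq_restrict_sub_restrict hA₁).symm
    rw [e1, Measure.restrict_apply_univ]
    calc (P - N) A₁ = ((p - n).restrict G) A₁ := by rw [← ePN]
      _ = (p - n) (A₁ ∩ G) := Measure.restrict_apply hA₁
      _ ≤ (p - n) A := measure_mono (inter_subset_left.trans hA₁A)
  have hδ₂u : δ₂ Set.univ ≤ (n - p) A := by
    have e2 : δ₂ = (N - P).restrict A₂ :=
      (Measure.restrict_sub_eq_restrict_sub_restrict hA₂).symm
    rw [e2, Measure.restrict_apply_univ]
    calc (N - P) A₂ = ((n - p).restrict G) A₂ := by rw [← eNP]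
      _ = (n - p) (A₂ ∩ G) := Measure.restrict_apply hA₂
      _ ≤ (n - p) A := measure_mono (inter_subset_left.trans hA₂A)
  have hfin1 : (p - n) A ≠ ⊤ := ne_top_of_le_ne_top (measure_ne_top P Set.univ) hpnA
  have hfin2 : (n - p) A ≠ ⊤ := ne_top_of_le_ne_top (measure_ne_top N Set.univ) hnpA
  haveI fδ₁ : IsFiniteMeasure δ₁ :=
    isFiniteMeasure_of_le (p.restrict G)
      (hδ₁le.trans (Measure.restrict_mono (hA₁A.trans hAG) le_rfl))
  haveI fδ₂ : IsFiniteMeasure δ₂ :=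
    isFiniteMeasure_of_le (n.restrict G)
      (hδ₂le.trans (Measure.restrict_mono (hA₂A.trans hAG) le_rfl))
  have hb1 : |∫ x, f x ∂δ₁| ≤ S * (δ₁ Set.univ).toReal := by
    have hmem : ∀ᵐ x ∂δ₁, x ∈ A₁ :=
      (ae_restrict_mem hA₁).filter_mono (MeasureTheory.ae_mono hδ₁le)
    have := norm_integral_le_of_norm_le_const (μ := δ₁) (f := f) (C := S)
      (hmem.mono fun x hx => by rw [Real.norm_eq_abs]; exact hS x (hA₁A hx))
    simpa [Real.norm_eq_abs, Measure.real] using this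
  have hb2 : |∫ x, f x ∂δ₂| ≤ S * (δ₂ Set.univ).toReal := by
    have hmem : ∀ᵐ x ∂δ₂, x ∈ A₂ :=
      (ae_restrict_mem hA₂).filter_mono (MeasureTheory.ae_mono hδ₂le)
    have := norm_integral_le_of_norm_le_const (μ := δ₂) (f := f) (C := S)
      (hmem.mono fun x hx => by rw [Real.norm_eq_abs]; exact hS x (hA₂A hx))
    simpa [Real.norm_eq_abs, Measure.real] using this
  have htv : ((tvSub p n) A).toReal = ((p - n) A).toReal + ((n - p) A).toReal := by
    have : (tvSub p n) A = (p - n) A + (n - p) A := by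
      simp [tvSub, Measure.add_apply]
    rw [this, ENNReal.toReal_add hfin1 hfin2]
  have key : (∫ x in A, f x ∂p) - ∫ x in A, f x ∂n
      = (∫ x, f x ∂δ₁) - ∫ x, f x ∂δ₂ := by
    rw [hsplit_p, hsplit_n]; linarith
  rw [key, htv]
  calc |(∫ x, f x ∂δ₁) - ∫ x, f x ∂δ₂| ≤ |∫ x, f x ∂δ₁| + |∫ x, f x ∂δ₂| := abs_sub _ _
    _ ≤ S * ((p - n) A).toReal + S * ((n - p) A).toReal := by
        refine add_le_add (hb1.trans ?_) (hb2.trans ?_)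
        · exact mul_le_mul_of_nonneg_left (ENNReal.toReal_mono hfin1 hδ₁u) hS0
        · exact mul_le_mul_of_nonneg_left (ENNReal.toReal_mono hfin2 hδ₂u) hS0
    _ = S * (((p - n) A).toReal + ((n - p) A).toReal) := by ring

lemma SM.integOn_abs_le (μ : SM) (hLF : μ.LocFin) {f : ℝ → ℝ} (hf : Continuous f)
    {a b : ℝ} {A : Set ℝ} (hA : MeasurableSet A) (hAG : A ⊆ Set.Icc a b)
    {S : ℝ} (hS0 : 0 ≤ S) (hS : ∀ x ∈ A, |f x| ≤ S) :
    |μ.integOn f A| ≤ S * (μ.tv A).toReal := by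
  haveI := hLF.1
  haveI := hLF.2
  have hPfin : IsFiniteMeasure (μ.pos.restrict (Set.Icc a b)) :=
    ⟨by rw [Measure.restrict_apply_univ]; exact isCompact_Icc.measure_lt_top⟩
  have hNfin : IsFiniteMeasure (μ.neg.restrict (Set.Icc a b)) :=
    ⟨by rw [Measure.restrict_apply_univ]; exact isCompact_Icc.measure_lt_top⟩
  have hip : IntegrableOn f A μ.pos :=
    (hf.continuousOn.integrableOn_compact isCompact_Icc).mono_set hAG
  have hin : IntegrableOn f A μ.neg :=
    (hf.continuousOn.integrableOn_compact isCompact_Icc).mono_set hAG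
  exact key_tv μ.pos μ.neg measurableSet_Icc hA hAG hPfin hNfin hip hin hS0 hS

lemma SM.integOn_union (μ : SM) (hLF : μ.LocFin) {f : ℝ → ℝ} (hf : Continuous f)
    {a b : ℝ} {A B : Set ℝ} (hd : Disjoint A B) (hB : MeasurableSet B)
    (hsub : A ∪ B ⊆ Set.Icc a b) :
    μ.integOn f (A ∪ B) = μ.integOn f A + μ.integOn f B := by
  haveI := hLF.1
  haveI := hLF.2
  have h1 : IntegrableOn f (Set.Icc a b) μ.pos :=
    hf.continuousOn.integrableOn_compact isCompact_Icc
  have h2 : IntegrableOn f (Set.Icc a b) μ.neg :=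
    hf.continuousOn.integrableOn_compact isCompact_Icc
  have hAs : A ⊆ Set.Icc a b := (Set.subset_union_left).trans hsub
  have hBs : B ⊆ Set.Icc a b := (Set.subset_union_right).trans hsub
  unfold SM.integOn
  rw [setIntegral_union hd hB (h1.mono_set hAs) (h1.mono_set hBs),
    setIntegral_union hd hB (h2.mono_set hAs) (h2.mono_set hBs)]
  ring

lemma intRight_add (μ : SM) (hLF : μ.LocFin) {f : ℝ → ℝ} (hf : Continuous f)
    {a b : ℝ} (hab : a ≤ b) :
    intRight μ f b = intRight μ f a + μ.integOn f (Set.Ioc a b) := by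
  rcases le_or_gt 0 a with h0a | ha0
  · have h0b : (0:ℝ) ≤ b := h0a.trans hab
    rw [intRight, intRight, if_pos h0b, if_pos h0a]
    have hu : Set.Icc (0:ℝ) a ∪ Set.Ioc a b = Set.Icc 0 b := Set.Icc_union_Ioc_eq_Icc h0a hab
    have hd : Disjoint (Set.Icc (0:ℝ) a) (Set.Ioc a b) := by
      rw [Set.disjoint_left]
      intro x hx hx'
      exact absurd hx.2 (not_le.2 hx'.1)
    rw [← hu, SM.integOn_union μ hLF hf hd measurableSet_Ioc (by rw [hu])]
  · rcases le_or_gt 0 b with h0b | hb0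
    · rw [intRight, intRight, if_pos h0b, if_neg (not_le.2 ha0)]
      have hu : Set.Ioo a 0 ∪ Set.Icc 0 b = Set.Ioc a b := Set.Ioo_union_Icc_eq_Ioc ha0 h0b
      have hd : Disjoint (Set.Ioo a (0:ℝ)) (Set.Icc 0 b) := by
        rw [Set.disjoint_left]
        intro x hx hx'
        exact absurd hx'.1 (not_le.2 hx.2)
      have := SM.integOn_union μ hLF hf hd measurableSet_Icc
        (by rw [hu]; exact Set.Ioc_subset_Icc_self (a := a) (b := b))
      rw [hu] at this
      rw [this]
      ring
    · rw [intRight, intRight, if_neg (not_le.2 hb0), if_neg (not_le.2 (lt_of_le_of_lt hab hb0))]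
      have hu : Set.Ioc a b ∪ Set.Ioo b 0 = Set.Ioo a 0 := Set.Ioc_union_Ioo_eq_Ioo hab hb0
      have hd : Disjoint (Set.Ioc a b) (Set.Ioo b (0:ℝ)) := by
        rw [Set.disjoint_left]
        intro x hx hx'
        exact absurd hx.2 (not_le.2 hx'.1)
      have := SM.integOn_union μ hLF hf hd measurableSet_Ioo
        (by rw [hu]; exact Set.Ioo_subset_Icc_self (a := a) (b := (0:ℝ)))
      rw [hu] at this
      rw [this]
      ring

lemma IsSolution.u_cont {μ : SM} {E : ℝ} {u v : ℝ → ℝ} (sol : IsSolution μ E u v) :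
    Continuous u := by
  have hvi : ∀ a b : ℝ, IntervalIntegrable v volume a b := fun a b =>
    intervalIntegrable_iff.mpr
      ((sol.locInt.integrableOn_isCompact isCompact_uIcc).mono_set Set.uIoc_subset_uIcc)
  have hufun : u = fun x => u 0 + ∫ t in (0:ℝ)..x, v t := funext sol.u_eq
  rw [hufun]
  exact continuous_const.add (intervalIntegral.continuous_primitive hvi 0)

set_option maxHeartbeats 1000000 in
/-- Solutions of `-u'' + uμ₁ = Eu` for a locally bounded
`p`-periodic signed measure `μ₁` grow at most exponentially, with a constant
depending only on `E`, `‖μ₁‖_loc`, `‖μ₁ - Eλ‖_loc` and the initial data. -/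
theorem periodic_solution_exp_bound (E M₁ M₂ K : ℝ) :
    ∃ C : ℝ, 0 ≤ C ∧
      ∀ p : ℝ, 0 < p → ∀ μ₁ : SM, μ₁.LocFin → μ₁.IsPeriodic p →
        normLoc μ₁.tv ≤ ENNReal.ofReal M₁ →
        normLoc (tvWithE μ₁ E) ≤ ENNReal.ofReal M₂ →
        ∀ u v : ℝ → ℝ, IsSolution μ₁ E u v → |u 0| ≤ K → |v 0| ≤ K →
          ∀ x : ℝ, |u x| ≤ C * Real.exp (C * |x|) := by
  set B : ℝ := max M₁ 0 with hBdef
  have hB0 : 0 ≤ B := le_max_right _ _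
  set R : ℝ := B + |E| with hRdef
  have hR0 : 0 ≤ R := add_nonneg hB0 (abs_nonneg E)
  have h2R : (0:ℝ) < 2 * R + 2 := by linarith
  set h : ℝ := 1 / (2 * R + 2) with hhdef
  have hh0 : 0 < h := one_div_pos.mpr h2R
  have hh1 : h ≤ 1 := by
    rw [hhdef, div_le_one h2R]; linarith
  have hhR : h * R ≤ 1 / 2 := by
    rw [hhdef, div_mul_eq_mul_div, one_mul, div_le_div_iff₀ h2R two_pos]; linarith
  set c : ℝ := 3 + 2 * R with hcdef
  have hc1 : 1 ≤ c := by rw [hcdef]; linarith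
  have hc0 : 0 < c := by linarith
  have hlogc : 0 ≤ Real.log c := Real.log_nonneg hc1
  set C : ℝ := max (2 * K * c) (Real.log c / h) with hCdef
  have hC0 : 0 ≤ C := le_trans (div_nonneg hlogc hh0.le) (le_max_right _ _)
  refine ⟨C, hC0, ?_⟩
  intro p hp μ hLF hper hM₁ _hM₂ u v sol hu0 hv0
  have hK0 : 0 ≤ K := (abs_nonneg _).trans hu0
  have hucont : Continuous u := sol.u_cont
  have hui : ∀ a b : ℝ, IntervalIntegrable u volume a b := fun a b =>
    hucont.intervalIntegrable a b
  have hvi : ∀ a b : ℝ, IntervalIntegrable v volume a b := fun a b =>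
    intervalIntegrable_iff.mpr
      ((sol.locInt.integrableOn_isCompact isCompact_uIcc).mono_set Set.uIoc_subset_uIcc)
  -- local bound on the total variation measure
  have hν : ∀ l r : ℝ, r ≤ l + 1 → (μ.tv (Set.Ioc l r)).toReal ≤ B := by
    intro l r hlr
    refine ENNReal.toReal_le_of_le_ofReal hB0 ?_
    calc μ.tv (Set.Ioc l r) ≤ μ.tv (Set.Icc l (l + 1)) :=
          measure_mono (fun x hx => ⟨hx.1.le, hx.2.trans hlr⟩)
      _ ≤ normLoc μ.tv := le_iSup (fun x : ℝ => μ.tv (Set.Icc x (x + 1))) l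
      _ ≤ ENNReal.ofReal M₁ := hM₁
      _ ≤ ENNReal.ofReal B := ENNReal.ofReal_le_ofReal (le_max_left _ _)
  -- difference formula for v
  have hvdiff : ∀ a t : ℝ, v t - v a
      = (intRight μ u t - intRight μ u a) - E * ∫ s in a..t, u s := by
    intro a t
    have hiu : (∫ s in (0:ℝ)..t, u s) - ∫ s in (0:ℝ)..a, u s = ∫ s in a..t, u s :=
      intervalIntegral.integral_interval_sub_left (hui 0 t) (hui 0 a)
    rw [sol.v_eq t, sol.v_eq a, ← hiu]
    ring
  -- main inductive estimate
  have main : ∀ n : ℕ, ∀ y : ℝ, |y| ≤ n * h → |u y| + |v y| ≤ 2 * K * c ^ n := by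
    intro n
    induction n with
    | zero =>
      intro y hy
      have hy0 : y = 0 := by
        have : |y| ≤ 0 := by simpa using hy
        exact abs_eq_zero.1 (le_antisymm this (abs_nonneg y))
      rw [hy0, pow_zero, mul_one]
      linarith
    | succ n ih =>
      intro y hy
      rcases le_or_gt (|y|) ((n : ℝ) * h) with hy' | hy'
      · have h1 := ih y hy'
        have h2 : 2 * K * c ^ n ≤ 2 * K * c ^ (n + 1) :=
          mul_le_mul_of_nonneg_left (pow_le_pow_right₀ hc1 (Nat.le_succ n)) (by linarith)
        linarith
      · set a : ℝ := if 0 ≤ y then (n : ℝ) * h else -((n : ℝ) * h) with hadef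
        have hnh0 : 0 ≤ (n : ℝ) * h := by positivity
        have haabs : |a| = (n : ℝ) * h := by
          rw [hadef]; split_ifs
          · exact abs_of_nonneg hnh0
          · rw [abs_neg]; exact abs_of_nonneg hnh0
        have hWa := ih a (le_of_eq haabs)
        have hy2 := abs_le.1 hy
        push_cast at hy2
        have hya : |y - a| ≤ h := by
          rw [hadef]; split_ifs with hy0
          · rw [abs_of_nonneg hy0] at hy'
            rw [abs_le]; constructor <;> linarith [hy2.2]
          · rw [abs_of_neg (not_le.1 hy0)] at hy'
            rw [abs_le]; constructor <;> [linarith [hy2.1]; linarith]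
        set J : Set ℝ := Set.uIcc a y with hJdef
        have hJab : ∀ t ∈ J, |t - a| ≤ h := by
          intro t ht
          have hya2 := abs_le.1 hya
          rw [abs_le]
          rcases Set.mem_uIcc.1 ht with ⟨h1, h2⟩ | ⟨h1, h2⟩ <;> constructor <;> linarith
        obtain ⟨z, hzJ, hz⟩ := isCompact_uIcc.exists_isMaxOn Set.nonempty_uIcc
          ((hucont.abs).continuousOn (s := J))
        set S : ℝ := |u z| with hSdef
        have hS0 : 0 ≤ S := abs_nonneg _
        have hSJ : ∀ t ∈ J, |u t| ≤ S := fun t ht => hz ht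
        have hsubJ : ∀ t ∈ J, Set.uIcc a t ⊆ J :=
          fun t ht => Set.uIcc_subset_uIcc Set.left_mem_uIcc ht
        -- bound for v on J
        have hvb : ∀ t ∈ J, |v t| ≤ |v a| + S * B + |E| * (S * h) := by
          intro t ht
          have hd := hJab t ht
          have hd2 := abs_le.1 hd
          have hE : |∫ s in a..t, u s| ≤ S * h := by
            have h1 : ‖∫ s in a..t, u s‖ ≤ S * |t - a| :=
              intervalIntegral.norm_integral_le_of_norm_le_const
                (fun x hx => by
                  rw [Real.norm_eq_abs]
                  exact hSJ x (hsubJ t ht (Set.uIoc_subset_uIcc hx)))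
            rw [Real.norm_eq_abs] at h1
            exact h1.trans (mul_le_mul_of_nonneg_left hd hS0)
          have hIm : |intRight μ u t - intRight μ u a| ≤ S * B := by
            rcases le_total a t with hat | hta
            · have he : intRight μ u t - intRight μ u a = μ.integOn u (Set.Ioc a t) := by
                rw [intRight_add μ hLF hucont hat]; ring
              rw [he]
              have hIoc : Set.Ioc a t ⊆ J := by
                intro x hx
                exact hsubJ t ht (by rw [Set.uIcc_of_le hat]; exact Set.Ioc_subset_Icc_self hx)
              have hb := SM.integOn_abs_le μ hLF hucont (a := a) (b := t)
                measurableSet_Ioc Set.Ioc_subset_Icc_self hS0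
                (fun x hx => hSJ x (hIoc hx))
              refine hb.trans ?_
              exact mul_le_mul_of_nonneg_left (hν a t (by linarith)) hS0
            · have he : intRight μ u t - intRight μ u a = -μ.integOn u (Set.Ioc t a) := by
                rw [intRight_add μ hLF hucont hta]; ring
              rw [he, abs_neg]
              have hIoc : Set.Ioc t a ⊆ J := by
                intro x hx
                exact hsubJ t ht
                  (by rw [Set.uIcc_of_ge hta]; exact Set.Ioc_subset_Icc_self hx)
              have hb := SM.integOn_abs_le μ hLF hucont (a := t) (b := a)
                measurableSet_Ioc Set.Ioc_subset_Icc_self hS0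
                (fun x hx => hSJ x (hIoc hx))
              refine hb.trans ?_
              exact mul_le_mul_of_nonneg_left (hν t a (by linarith)) hS0
          have hvt : v t = v a + (intRight μ u t - intRight μ u a)
              - E * ∫ s in a..t, u s := by
            have := hvdiff a t; linarith
          rw [hvt]
          have step1 : |v a + (intRight μ u t - intRight μ u a) - E * ∫ s in a..t, u s|
              ≤ |v a| + |intRight μ u t - intRight μ u a| + |E * ∫ s in a..t, u s| := by
            calc _ ≤ |v a + (intRight μ u t - intRight μ u a)| + |E * ∫ s in a..t, u s| :=
                  abs_sub _ _
              _ ≤ _ := by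
                  have := abs_add_le (v a) (intRight μ u t - intRight μ u a)
                  linarith
          have hEterm : |E * ∫ s in a..t, u s| ≤ |E| * (S * h) := by
            rw [abs_mul]
            exact mul_le_mul_of_nonneg_left hE (abs_nonneg E)
          linarith
        -- bound for S
        have hVmax0 : 0 ≤ |v a| + S * B + |E| * (S * h) := by positivity
        have huz : S ≤ |u a| + (|v a| + S * B + |E| * (S * h)) * h := by
          have hud : u z - u a = ∫ s in a..z, v s := by
            have h1 := sol.u_eq z
            have h2 := sol.u_eq a
            have hiv : (∫ s in (0:ℝ)..z, v s) - ∫ s in (0:ℝ)..a, v s = ∫ s in a..z, v s :=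
              intervalIntegral.integral_interval_sub_left (hvi 0 z) (hvi 0 a)
            rw [h1, h2, ← hiv]; ring
          have hIb : |∫ s in a..z, v s| ≤ (|v a| + S * B + |E| * (S * h)) * |z - a| := by
            have := intervalIntegral.norm_integral_le_of_norm_le_const
              (C := |v a| + S * B + |E| * (S * h)) (f := v) (a := a) (b := z)
              (fun x hx => by
                rw [Real.norm_eq_abs]
                exact hvb x (hsubJ z hzJ (Set.uIoc_subset_uIcc hx)))
            rwa [Real.norm_eq_abs] at this
          have h3 : |z - a| ≤ h := hJab z hzJ
          have h4 : |∫ s in a..z, v s| ≤ (|v a| + S * B + |E| * (S * h)) * h :=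
            hIb.trans (mul_le_mul_of_nonneg_left h3 hVmax0)
          have h5 : |u z| ≤ |u a| + |∫ s in a..z, v s| := by
            have : u z = u a + ∫ s in a..z, v s := by linarith
            rw [this]
            exact abs_add_le _ _
          calc S = |u z| := rfl
            _ ≤ |u a| + |∫ s in a..z, v s| := h5
            _ ≤ |u a| + (|v a| + S * B + |E| * (S * h)) * h := by linarith
        have hS2 : S ≤ 2 * (|u a| + |v a|) := by
          have hBR : B ≤ R := by rw [hRdef]; linarith [abs_nonneg E]
          have hEhh : |E| * (S * h) * h ≤ |E| * S * h := by
            have : |E| * (S * h) * h = |E| * S * h * h := by ring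
            rw [this]
            calc |E| * S * h * h ≤ |E| * S * h * 1 :=
                  mul_le_mul_of_nonneg_left hh1 (by positivity)
              _ = |E| * S * h := by ring
          have hSB : S * B * h + |E| * S * h ≤ S * (1 / 2) := by
            have e1 : S * B * h + |E| * S * h = S * (h * (B + |E|)) := by ring
            rw [e1, ← hRdef]
            exact mul_le_mul_of_nonneg_left hhR hS0
          have hva : |v a| * h ≤ |v a| := by
            calc |v a| * h ≤ |v a| * 1 := mul_le_mul_of_nonneg_left hh1 (abs_nonneg _)
              _ = |v a| := by ring
          nlinarith [huz]
        -- conclude the step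
        have hyJ : y ∈ J := Set.right_mem_uIcc
        have h1 : |u y| ≤ S := hSJ y hyJ
        have h2 : |v y| ≤ |v a| + S * B + |E| * (S * h) := hvb y hyJ
        have hstep : |u y| + |v y| ≤ c * (|u a| + |v a|) := by
          have hSh : S * h ≤ S := by
            calc S * h ≤ S * 1 := mul_le_mul_of_nonneg_left hh1 hS0
              _ = S := by ring
          have hE1 : |E| * (S * h) ≤ |E| * S := mul_le_mul_of_nonneg_left hSh (abs_nonneg E)
          have hSB2 : S * B ≤ 2 * (|u a| + |v a|) * B := mul_le_mul_of_nonneg_right hS2 hB0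
          have hSE2 : |E| * S ≤ |E| * (2 * (|u a| + |v a|)) :=
            mul_le_mul_of_nonneg_left hS2 (abs_nonneg E)
          rw [hcdef, hRdef]
          linarith [h1, h2, hS2, hE1, hSB2, hSE2, abs_nonneg (v a), abs_nonneg (u a),
            mul_le_mul_of_nonneg_right hS2 (abs_nonneg E)]
        calc |u y| + |v y| ≤ c * (|u a| + |v a|) := hstep
          _ ≤ c * (2 * K * c ^ n) := mul_le_mul_of_nonneg_left hWa hc0.le
          _ = 2 * K * c ^ (n + 1) := by ring
  -- conclusion
  intro x
  set n : ℕ := ⌈|x| / h⌉₊ with hn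
  have hx1 : |x| ≤ (n : ℝ) * h := by
    have h1 : |x| / h ≤ (n : ℝ) := Nat.le_ceil (|x| / h)
    calc |x| = |x| / h * h := by field_simp
      _ ≤ (n : ℝ) * h := mul_le_mul_of_nonneg_right h1 hh0.le
  have hx2 : (n : ℝ) ≤ |x| / h + 1 :=
    (Nat.ceil_lt_add_one (div_nonneg (abs_nonneg x) hh0.le)).le
  have hb := main n x hx1
  have hcn : (c : ℝ) ^ n ≤ Real.exp ((|x| / h + 1) * Real.log c) := by
    have hpow : (c : ℝ) ^ n = Real.exp ((n : ℝ) * Real.log c) := by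
      rw [Real.exp_nat_mul, Real.exp_log hc0]
    rw [hpow]
    exact Real.exp_le_exp.2 (mul_le_mul_of_nonneg_right hx2 hlogc)
  have hux : |u x| ≤ 2 * K * c ^ n := by
    have := abs_nonneg (v x)
    linarith
  calc |u x| ≤ 2 * K * c ^ n := hux
    _ ≤ 2 * K * Real.exp ((|x| / h + 1) * Real.log c) :=
        mul_le_mul_of_nonneg_left hcn (by linarith)
    _ = (2 * K * c) * Real.exp (Real.log c / h * |x|) := by
        rw [show (|x| / h + 1) * Real.log c = Real.log c / h * |x| + Real.log c by
          field_simp, Real.exp_add, Real.exp_log hc0]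
        ring
    _ ≤ C * Real.exp (C * |x|) := by
        refine mul_le_mul (le_max_left _ _) ?_ (Real.exp_pos _).le hC0
        exact Real.exp_le_exp.2 (mul_le_mul_of_nonneg_right (le_max_right _ _) (abs_nonneg x))
end

section
/- Let μ be a Gordon measure with p_m-periodic approximants (μ^m), let E ∈ ℝ, let (u,v) be a solution of −u'' + uμ = Eu, and for each m let (u_m, v_m) be the solution of −u'' + uμ^m = Eu with the same initial data at 0 (u_m(0) = u(0), v_m(0) = v(0), |u(0)|² + |v(0)|² = 1). Then there exists a constant C ≥ 0, independent of m, such that for all x ∈ ℝ, ‖(u(x) − u_m(x), v(x) − v_m(x))‖ ≤ C e^{C|x|} |μ − μ^m|(I_x). -/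
open MeasureTheory Filter Set Real
open scoped ENNReal

namespace GP

set_option maxHeartbeats 1000000

/-! ### Comparison of integrals against two measures via `tvSub` -/

lemma ae_mem_of_le_restrict {a ν : Measure ℝ} {A : Set ℝ} (hA : MeasurableSet A)
    (h : ν ≤ a.restrict A) : ∀ᵐ x ∂ν, x ∈ A := by
  rw [ae_iff]
  have h0 : ν {x | ¬ x ∈ A} ≤ (a.restrict A) Aᶜ := by
    exact h Aᶜ
  rw [Measure.restrict_apply hA.compl] at h0
  simpa using le_antisymm (h0.trans (by simp)) (zero_le)

lemma int_le_of_le_restrict {a ν : Measure ℝ} {A : Set ℝ} (hA : MeasurableSet A)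
    (h : ν ≤ a.restrict A) (hfin : a A ≠ ∞) (f : ℝ → ℝ) (hf : Continuous f)
    {S : ℝ} (hS : ∀ s ∈ A, |f s| ≤ S) :
    Integrable f ν ∧ |∫ s, f s ∂ν| ≤ S * (ν univ).toReal := by
  haveI : IsFiniteMeasure ν := by
    constructor
    calc ν univ ≤ (a.restrict A) univ := h univ
    _ = a A := by rw [Measure.restrict_apply_univ]
    _ < ∞ := hfin.lt_top
  have hae : ∀ᵐ x ∂ν, ‖f x‖ ≤ S := by
    filter_upwards [ae_mem_of_le_restrict hA h] with x hx
    simpa [Real.norm_eq_abs] using hS x hx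
  have hint : Integrable f ν :=
    Integrable.mono' (integrable_const S) hf.aestronglyMeasurable hae
  exact ⟨hint, by simpa [Real.norm_eq_abs, measureReal_def] using norm_integral_le_of_norm_le_const hae (f := f)⟩

lemma integral_sub_le_tvSub (a b : Measure ℝ) (A : Set ℝ) (hA : MeasurableSet A)
    (ha : a A ≠ ∞) (hb : b A ≠ ∞) (f : ℝ → ℝ) (hf : Continuous f)
    {S : ℝ} (hS0 : 0 ≤ S) (hS : ∀ s ∈ A, |f s| ≤ S) :
    (∫ s in A, f s ∂a) - ∫ s in A, f s ∂b ≤ S * ((tvSub a b) A).toReal := by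
  set a' := a.restrict A with ha'
  set b' := b.restrict A with hb'
  haveI : IsFiniteMeasure a' := ⟨by rw [ha', Measure.restrict_apply_univ]; exact ha.lt_top⟩
  haveI : IsFiniteMeasure b' := ⟨by rw [hb', Measure.restrict_apply_univ]; exact hb.lt_top⟩
  obtain ⟨P, hPm, hP1, hP2⟩ := hahn_decomposition (μ := a') (ν := b')
  have hle1 : b'.restrict P ≤ a'.restrict P := by
    rw [Measure.le_iff]
    intro s hs
    rw [Measure.restrict_apply hs, Measure.restrict_apply hs]
    exact hP1 _ (hs.inter hPm) inter_subset_right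
  have hle2 : a'.restrict Pᶜ ≤ b'.restrict Pᶜ := by
    rw [Measure.le_iff]
    intro s hs
    rw [Measure.restrict_apply hs, Measure.restrict_apply hs]
    exact hP2 _ (hs.inter hPm.compl) inter_subset_right
  set ρ := a'.restrict P - b'.restrict P with hρdef
  set ρ' := b'.restrict Pᶜ - a'.restrict Pᶜ with hρ'def
  have hρ : ρ + b'.restrict P = a'.restrict P := Measure.sub_add_cancel_of_le hle1
  have hρ' : ρ' + a'.restrict Pᶜ = b'.restrict Pᶜ := Measure.sub_add_cancel_of_le hle2
  have hρle : ρ ≤ a.restrict A := le_trans Measure.sub_le (Measure.restrict_le_self)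
  have hρ'le : ρ' ≤ b.restrict A := le_trans Measure.sub_le (Measure.restrict_le_self)
  have haPle : a'.restrict P ≤ a.restrict A := Measure.restrict_le_self
  have haPcle : a'.restrict Pᶜ ≤ a.restrict A := Measure.restrict_le_self
  have hbPle : b'.restrict P ≤ b.restrict A := Measure.restrict_le_self
  have hbPcle : b'.restrict Pᶜ ≤ b.restrict A := Measure.restrict_le_self
  obtain ⟨hiρ, hbρ⟩ := int_le_of_le_restrict hA hρle ha f hf hS
  obtain ⟨hiρ', hbρ'⟩ := int_le_of_le_restrict hA hρ'le hb f hf hS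
  obtain ⟨hiaP, -⟩ := int_le_of_le_restrict hA haPle ha f hf hS
  obtain ⟨hiaPc, -⟩ := int_le_of_le_restrict hA haPcle ha f hf hS
  obtain ⟨hibP, -⟩ := int_le_of_le_restrict hA hbPle hb f hf hS
  obtain ⟨hibPc, -⟩ := int_le_of_le_restrict hA hbPcle hb f hf hS
  have hsplita : ∫ s, f s ∂a' = (∫ s, f s ∂(a'.restrict P)) + ∫ s, f s ∂(a'.restrict Pᶜ) := by
    conv_lhs => rw [← Measure.restrict_add_restrict_compl (μ := a') hPm]
    exact integral_add_measure hiaP hiaPc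
  have hsplitb : ∫ s, f s ∂b' = (∫ s, f s ∂(b'.restrict P)) + ∫ s, f s ∂(b'.restrict Pᶜ) := by
    conv_lhs => rw [← Measure.restrict_add_restrict_compl (μ := b') hPm]
    exact integral_add_measure hibP hibPc
  have heqa : ∫ s, f s ∂(a'.restrict P) = (∫ s, f s ∂ρ) + ∫ s, f s ∂(b'.restrict P) := by
    rw [← hρ]; exact integral_add_measure hiρ hibP
  have heqb : ∫ s, f s ∂(b'.restrict Pᶜ) = (∫ s, f s ∂ρ') + ∫ s, f s ∂(a'.restrict Pᶜ) := by
    rw [← hρ']; exact integral_add_measure hiρ' hiaPc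
  have hkey : (∫ s in A, f s ∂a) - ∫ s in A, f s ∂b = (∫ s, f s ∂ρ) - ∫ s, f s ∂ρ' := by
    have h1 : ∫ s in A, f s ∂a = ∫ s, f s ∂a' := rfl
    rw [h1, hsplita, heqa]
    have h2 : ∫ s in A, f s ∂b = ∫ s, f s ∂b' := rfl
    rw [h2, hsplitb, heqb]
    ring
  have hρuniv : ρ univ ≤ (a - b) A := by
    have h1 : ρ = ((a - b).restrict A).restrict P := by
      rw [hρdef, ← Measure.restrict_sub_eq_restrict_sub_restrict hPm, ha', hb',
        ← Measure.restrict_sub_eq_restrict_sub_restrict hA]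
    rw [h1, Measure.restrict_apply_univ, Measure.restrict_apply hPm]
    exact le_trans (measure_mono inter_subset_right) le_rfl
  have hρ'univ : ρ' univ ≤ (b - a) A := by
    have h1 : ρ' = ((b - a).restrict A).restrict Pᶜ := by
      rw [hρ'def, ← Measure.restrict_sub_eq_restrict_sub_restrict hPm.compl, ha', hb',
        ← Measure.restrict_sub_eq_restrict_sub_restrict hA]
    rw [h1, Measure.restrict_apply_univ, Measure.restrict_apply hPm.compl]
    exact le_trans (measure_mono inter_subset_right) le_rfl
  have hfin1 : (a - b) A ≠ ∞ := (lt_of_le_of_lt (Measure.sub_le A) ha.lt_top).ne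
  have hfin2 : (b - a) A ≠ ∞ := (lt_of_le_of_lt (Measure.sub_le A) hb.lt_top).ne
  calc (∫ s in A, f s ∂a) - ∫ s in A, f s ∂b = (∫ s, f s ∂ρ) - ∫ s, f s ∂ρ' := hkey
  _ ≤ |∫ s, f s ∂ρ| + |∫ s, f s ∂ρ'| := by
      have h1 := le_abs_self (∫ s, f s ∂ρ)
      have h2 := neg_abs_le (∫ s, f s ∂ρ')
      linarith
  _ ≤ S * (ρ univ).toReal + S * (ρ' univ).toReal := add_le_add hbρ hbρ'
  _ ≤ S * ((a - b) A).toReal + S * ((b - a) A).toReal := by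
      exact add_le_add
        (mul_le_mul_of_nonneg_left (ENNReal.toReal_mono hfin1 hρuniv) hS0)
        (mul_le_mul_of_nonneg_left (ENNReal.toReal_mono hfin2 hρ'univ) hS0)
  _ = S * ((tvSub a b) A).toReal := by
      rw [show (tvSub a b) A = (a - b) A + (b - a) A from Measure.add_apply _ _ _,
        ENNReal.toReal_add hfin1 hfin2]
      ring

lemma abs_integral_sub_le_tvSub (a b : Measure ℝ) (A : Set ℝ) (hA : MeasurableSet A)
    (ha : a A ≠ ∞) (hb : b A ≠ ∞) (f : ℝ → ℝ) (hf : Continuous f)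
    {S : ℝ} (hS0 : 0 ≤ S) (hS : ∀ s ∈ A, |f s| ≤ S) :
    |(∫ s in A, f s ∂a) - ∫ s in A, f s ∂b| ≤ S * ((tvSub a b) A).toReal := by
  rw [abs_sub_le_iff]
  constructor
  · exact integral_sub_le_tvSub a b A hA ha hb f hf hS0 hS
  · have h := integral_sub_le_tvSub b a A hA hb ha f hf hS0 hS
    have h2 : tvSub b a = tvSub a b := by rw [tvSub, tvSub, add_comm]
    rwa [h2] at h

/-! ### A Gronwall lemma in integral form -/

lemma integral_pow_sub (a t : ℝ) (n : ℕ) :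
    ∫ s in a..t, (s - a) ^ n = (t - a) ^ (n + 1) / (n + 1) := by
  have h := intervalIntegral.integral_comp_sub_right (a := a) (b := t) (fun s => s ^ n) a
  rw [h, integral_pow]
  simp

lemma integral_exp_mul_sub (a t B : ℝ) (hB : B ≠ 0) :
    ∫ s in a..t, Real.exp (B * (s - a)) = (Real.exp (B * (t - a)) - 1) / B := by
  have h := intervalIntegral.integral_comp_sub_right (a := a) (b := t)
    (fun s => Real.exp (B * s)) a
  rw [h]
  have h2 := intervalIntegral.integral_comp_mul_left (a := (0:ℝ)) (b := t - a)
    (fun s => Real.exp s) hB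
  rw [sub_self, h2, integral_exp]
  rw [smul_eq_mul]
  field_simp
  rw [mul_zero, Real.exp_zero]

lemma gronwall (f : ℝ → ℝ) (a b A B S : ℝ) (hab : a ≤ b) (hA : 0 ≤ A) (hB : 0 ≤ B)
    (hint : IntegrableOn f (Icc a b) volume)
    (hfS : ∀ t ∈ Icc a b, f t ≤ S)
    (hf : ∀ t ∈ Icc a b, f t ≤ A + B * ∫ s in a..t, f s) :
    ∀ t ∈ Icc a b, f t ≤ A * Real.exp (B * (t - a)) := by
  rcases eq_or_lt_of_le hB with hB0 | hBpos
  · intro t ht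
    have := hf t ht
    rw [← hB0] at this ⊢
    simpa using this
  have hBne : B ≠ 0 := ne_of_gt hBpos
  set K := max S 0 with hK
  have hK0 : 0 ≤ K := le_max_right _ _
  have main : ∀ n : ℕ, ∀ t ∈ Icc a b, f t ≤
      A * Real.exp (B * (t - a)) + K * (B * (t - a)) ^ n / n.factorial := by
    intro n
    induction n with
    | zero =>
      intro t ht
      have h1 : f t ≤ K := le_trans (hfS t ht) (le_max_left _ _)
      have h2 : 0 ≤ A * Real.exp (B * (t - a)) := by positivity
      simp only [pow_zero, Nat.factorial_zero, Nat.cast_one, mul_one]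
      linarith
    | succ n ih =>
      intro t ht
      have hat : a ≤ t := ht.1
      set g : ℝ → ℝ := fun s =>
        A * Real.exp (B * (s - a)) + K * B ^ n / n.factorial * (s - a) ^ n with hg
      have hc1 : Continuous (fun s : ℝ => A * Real.exp (B * (s - a))) := by fun_prop
      have hc2 : Continuous (fun s : ℝ => K * B ^ n / (n.factorial : ℝ) * (s - a) ^ n) := by
        fun_prop
      have hgc : Continuous g := by rw [hg]; exact hc1.add hc2
      have hfi : IntervalIntegrable f volume a t := by
        rw [intervalIntegrable_iff_integrableOn_Ioc_of_le hat]
        exact hint.mono_set (Ioc_subset_Icc_self.trans (Icc_subset_Icc le_rfl ht.2))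
      have hmono : ∫ s in a..t, f s ≤ ∫ s in a..t, g s := by
        apply intervalIntegral.integral_mono_on hat hfi (hgc.intervalIntegrable a t)
        intro s hs
        have hs' : s ∈ Icc a b := ⟨hs.1, hs.2.trans ht.2⟩
        have h := ih s hs'
        calc f s ≤ A * Real.exp (B * (s - a)) + K * (B * (s - a)) ^ n / n.factorial := h
        _ = g s := by rw [hg]; simp only [mul_pow]; ring
      have hgint : ∫ s in a..t, g s =
          A * ((Real.exp (B * (t - a)) - 1) / B) +
            K * B ^ n / n.factorial * ((t - a) ^ (n + 1) / (n + 1)) := by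
        rw [hg]
        rw [intervalIntegral.integral_add (hc1.intervalIntegrable a t)
            (hc2.intervalIntegrable a t),
          intervalIntegral.integral_const_mul, intervalIntegral.integral_const_mul,
          integral_exp_mul_sub a t B hBne, integral_pow_sub a t n]
      calc f t ≤ A + B * ∫ s in a..t, f s := hf t ht
      _ ≤ A + B * ∫ s in a..t, g s := by nlinarith [hmono]
      _ = A * Real.exp (B * (t - a)) + K * (B * (t - a)) ^ (n + 1) / (n + 1).factorial := by
          rw [hgint, mul_pow, Nat.factorial_succ]
          have hn : ((n.factorial : ℝ)) ≠ 0 := by positivity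
          have hn1 : ((n : ℝ) + 1) ≠ 0 := by positivity
          push_cast
          field_simp
          ring
  intro t ht
  have htend : Tendsto (fun n : ℕ =>
      A * Real.exp (B * (t - a)) + K * (B * (t - a)) ^ n / n.factorial) atTop
      (nhds (A * Real.exp (B * (t - a)) + K * 0)) := by
    apply Tendsto.add tendsto_const_nhds
    have h1 := FloorSemiring.tendsto_pow_div_factorial_atTop (B * (t - a))
    have h2 := h1.const_mul K
    simpa [mul_div_assoc] using h2
  rw [mul_zero, add_zero] at htend
  exact ge_of_tendsto' htend (fun n => main n t ht)

/-! ### The core iteration lemma -/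

noncomputable def KK (B : ℝ) : ℝ := 2 * (1 + B) * Real.exp B + 1

lemma KK_ge_one {B : ℝ} (hB : 0 ≤ B) : 1 ≤ KK B := by
  have := Real.one_le_exp hB
  unfold KK; nlinarith

lemma core (x : ℝ) (U V : ℝ → ℝ)
    (hVint : ∀ a b : ℝ, IntervalIntegrable V volume a b)
    (hU : ∀ t : ℝ, U t = U 0 + ∫ s in (0:ℝ)..t, V s)
    (ε B : ℝ) (hε : 0 ≤ ε) (hB : 0 ≤ B)
    (hV : ∀ a t : ℝ, 0 ≤ a → a ≤ t → t ≤ x → t ≤ a + 1 →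
      ∀ S : ℝ, 0 ≤ S → (∀ s ∈ Icc a t, |U s| ≤ S) → |V t - V a| ≤ ε + B * S) :
    ∀ t : ℝ, 0 ≤ t → t ≤ x →
      |U t| + |V t| ≤ (|U 0| + |V 0| + ε) * (2 * KK B) ^ (⌈x⌉₊ + 1) := by
  have hUc : Continuous U := by
    have h := intervalIntegral.continuous_primitive hVint 0
    have h2 : U = fun t => U 0 + ∫ s in (0:ℝ)..t, V s := funext hU
    rw [h2]
    exact continuous_const.add h
  have hUinc : ∀ a t : ℝ, U t - U a = ∫ s in a..t, V s := by
    intro a t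
    rw [hU t, hU a]
    have := intervalIntegral.integral_interval_sub_left (hVint 0 t) (hVint 0 a)
    rw [← this]; ring
  set f : ℝ → ℝ := fun s => |V s| with hf
  have hfnn : ∀ s, 0 ≤ f s := fun s => abs_nonneg _
  have hfii : ∀ a b : ℝ, IntervalIntegrable f volume a b := fun a b => (hVint a b).abs
  have hfint : ∀ a b : ℝ, a ≤ b → IntegrableOn f (Icc a b) volume := fun a b hab =>
    (intervalIntegrable_iff_integrableOn_Icc_of_le hab).mp (hfii a b)
  have hK1 : (1:ℝ) ≤ KK B := KK_ge_one hB
  have hexp1 : (1:ℝ) ≤ Real.exp B := Real.one_le_exp hB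
  have step : ∀ a t : ℝ, 0 ≤ a → a ≤ t → t ≤ x → t ≤ a + 1 →
      |U t| + |V t| ≤ KK B * ((|U a| + |V a|) + ε) := by
    intro a t ha hat htx hta
    set A0 : ℝ := |V a| + ε + B * |U a| with hA0
    have hA0nn : 0 ≤ A0 := by positivity
    have hUb : ∀ t' : ℝ, a ≤ t' → ∀ s ∈ Icc a t', |U s| ≤ |U a| + ∫ r in a..t', f r := by
      intro t' hat' s hs
      have h1 : |U s| ≤ |U a| + |∫ r in a..s, V r| := by
        have h3 := hUinc a s
        calc |U s| = |U a + (U s - U a)| := by ring_nf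
        _ ≤ |U a| + |U s - U a| := abs_add_le _ _
        _ = |U a| + |∫ r in a..s, V r| := by rw [h3]
      have h2 : |∫ r in a..s, V r| ≤ ∫ r in a..s, f r :=
        intervalIntegral.abs_integral_le_integral_abs hs.1
      have h3 : (∫ r in a..s, f r) ≤ ∫ r in a..t', f r :=
        intervalIntegral.integral_mono_interval le_rfl hs.1 hs.2
          (ae_of_all _ hfnn) (hfii a t')
      linarith
    have hgr : ∀ t' ∈ Icc a t, f t' ≤ A0 + B * ∫ s in a..t', f s := by
      intro t' ht'
      have hS0 : 0 ≤ |U a| + ∫ r in a..t', f r := by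
        have : 0 ≤ ∫ r in a..t', f r :=
          intervalIntegral.integral_nonneg ht'.1 (fun s _ => hfnn s)
        positivity
      have h := hV a t' ha ht'.1 (ht'.2.trans htx) (ht'.2.trans hta) _ hS0 (hUb t' ht'.1)
      have h2 : f t' ≤ |V a| + |V t' - V a| := by
        rw [hf]
        have := abs_add_le (V a) (V t' - V a)
        simpa using this
      rw [hA0]
      linarith
    obtain ⟨SU, hSU⟩ := (isCompact_Icc (a := a) (b := t)).exists_bound_of_continuousOn
      hUc.continuousOn
    set SU' : ℝ := max SU 0 with hSU'
    have hSU'0 : 0 ≤ SU' := le_max_right _ _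
    have hSb : ∀ t' ∈ Icc a t, f t' ≤ |V a| + ε + B * SU' := by
      intro t' ht'
      have h := hV a t' ha ht'.1 (ht'.2.trans htx) (ht'.2.trans hta) SU' hSU'0
        (fun s hs => by
          have := hSU s ⟨hs.1, hs.2.trans ht'.2⟩
          rw [Real.norm_eq_abs] at this
          exact this.trans (le_max_left _ _))
      have h2 : f t' ≤ |V a| + |V t' - V a| := by
        rw [hf]
        have := abs_add_le (V a) (V t' - V a)
        simpa using this
      linarith
    have hgron := gronwall f a t A0 B (|V a| + ε + B * SU') hat hA0nn hB
      (hfint a t hat) hSb hgr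
    have hVt : |V t| ≤ A0 * Real.exp B := by
      have h := hgron t ⟨hat, le_rfl⟩
      have h2 : Real.exp (B * (t - a)) ≤ Real.exp B := by
        apply Real.exp_le_exp.2
        nlinarith
      calc |V t| = f t := rfl
      _ ≤ A0 * Real.exp (B * (t - a)) := h
      _ ≤ A0 * Real.exp B := by nlinarith
    have hUt : |U t| ≤ |U a| + A0 * Real.exp B := by
      have h1 := hUb t hat t ⟨hat, le_rfl⟩
      have h2 : (∫ r in a..t, f r) ≤ A0 * Real.exp B * (t - a) := by
        have hmono : (∫ r in a..t, f r) ≤ ∫ r in a..t, A0 * Real.exp B := by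
          apply intervalIntegral.integral_mono_on hat (hfii a t)
            (intervalIntegrable_const)
          intro s hs
          have h := hgron s hs
          have h2 : Real.exp (B * (s - a)) ≤ Real.exp B := by
            apply Real.exp_le_exp.2
            nlinarith [hs.1, hs.2, hta]
          calc f s ≤ A0 * Real.exp (B * (s - a)) := h
          _ ≤ A0 * Real.exp B := by nlinarith
        rw [intervalIntegral.integral_const, smul_eq_mul] at hmono
        linarith [hmono]
      have h3 : A0 * Real.exp B * (t - a) ≤ A0 * Real.exp B := by
        have : 0 ≤ A0 * Real.exp B := by positivity
        nlinarith
      linarith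
    have hfin : |U a| + 2 * (A0 * Real.exp B) ≤ KK B * ((|U a| + |V a|) + ε) := by
      rw [hA0, KK]
      have h1 : 0 ≤ |U a| := abs_nonneg _
      have h2 : 0 ≤ |V a| := abs_nonneg _
      have e0 : (0:ℝ) ≤ Real.exp B := le_trans zero_le_one hexp1
      nlinarith [mul_nonneg e0 h1, mul_nonneg (mul_nonneg hB h2) e0,
        mul_nonneg (mul_nonneg hB hε) e0]
    linarith
  have ind : ∀ n : ℕ, ∀ t : ℝ, 0 ≤ t → t ≤ x → t ≤ n →
      |U t| + |V t| ≤ (|U 0| + |V 0| + ε) * (2 * KK B) ^ (n + 1) := by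
    intro n
    induction n with
    | zero =>
      intro t ht0 htx htn
      have h0 : t = 0 := le_antisymm (by exact_mod_cast htn) ht0
      subst h0
      have h1 : (1:ℝ) ≤ (2 * KK B) ^ (0 + 1) := by
        rw [pow_one]; nlinarith
      have h2 : 0 ≤ |U 0| + |V 0| := by positivity
      nlinarith
    | succ n ih =>
      intro t ht0 htx htn
      by_cases hcase : t ≤ n
      · have h := ih t ht0 htx hcase
        have h1 : (2 * KK B) ^ (n + 1) ≤ (2 * KK B) ^ (n + 1 + 1) := by
          apply pow_le_pow_right₀ (by nlinarith)
          omega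
        have h2 : 0 ≤ |U 0| + |V 0| + ε := by positivity
        calc |U t| + |V t| ≤ (|U 0| + |V 0| + ε) * (2 * KK B) ^ (n + 1) := h
        _ ≤ (|U 0| + |V 0| + ε) * (2 * KK B) ^ (n + 1 + 1) := by nlinarith
      · push_neg at hcase
        have hna : (0:ℝ) ≤ n := Nat.cast_nonneg n
        have hnx : (n:ℝ) ≤ x := le_trans (le_of_lt hcase) htx
        have hwn := ih n hna hnx le_rfl
        have hstep := step n t hna (le_of_lt hcase) htx (by push_cast at htn ⊢; linarith)
        set P : ℝ := (2 * KK B) ^ (n + 1) with hP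
        have hP1 : (1:ℝ) ≤ P := by
          rw [hP]
          exact one_le_pow₀ (by nlinarith)
        have h2 : 0 ≤ |U 0| + |V 0| := by positivity
        have hpow : (2 * KK B) ^ (n + 1 + 1) = 2 * KK B * P := by
          rw [hP, ← pow_succ']
        rw [hpow]
        have hKK0 : (0:ℝ) ≤ KK B := by linarith
        have h3 : ε ≤ (|U 0| + |V 0| + ε) * P := by
          nlinarith [mul_le_mul_of_nonneg_left hP1 (add_nonneg h2 hε)]
        calc |U t| + |V t| ≤ KK B * ((|U (n:ℝ)| + |V (n:ℝ)|) + ε) := hstep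
        _ ≤ KK B * ((|U 0| + |V 0| + ε) * P + (|U 0| + |V 0| + ε) * P) :=
            mul_le_mul_of_nonneg_left (by linarith) hKK0
        _ = (|U 0| + |V 0| + ε) * (2 * KK B * P) := by ring
  intro t ht0 htx
  exact ind ⌈x⌉₊ t ht0 htx (le_trans htx (Nat.le_ceil x))

/-! ### Solution increments -/

lemma sol_vint {μ : SM} {E : ℝ} {u v : ℝ → ℝ} (hs : IsSolution μ E u v) :
    ∀ a b : ℝ, IntervalIntegrable v volume a b := fun a b =>
  (hs.locInt.integrableOn_isCompact isCompact_uIcc).intervalIntegrable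

lemma sol_cont {μ : SM} {E : ℝ} {u v : ℝ → ℝ} (hs : IsSolution μ E u v) :
    Continuous u := by
  have h2 : u = fun t => u 0 + ∫ s in (0:ℝ)..t, v s := funext hs.u_eq
  rw [h2]
  exact continuous_const.add (intervalIntegral.continuous_primitive (sol_vint hs) 0)

lemma zero_sol (μ : SM) (E : ℝ) : IsSolution μ E (fun _ => 0) (fun _ => 0) := by
  refine ⟨locallyIntegrable_const 0, by simp, ?_⟩
  intro x
  unfold intRight SM.integOn
  split_ifs <;> simp

lemma v_inc_pos (μ : SM) (hloc : μ.LocFin) {E : ℝ} {u v : ℝ → ℝ}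
    (hs : IsSolution μ E u v) (hu : Continuous u) {a t : ℝ} (ha : 0 ≤ a) (hat : a ≤ t) :
    v t - v a = μ.integOn u (Ioc a t) - E * ∫ s in a..t, u s := by
  haveI := hloc.1
  haveI := hloc.2
  have h0t : (0:ℝ) ≤ t := ha.trans hat
  have hdisj : Disjoint (Icc (0:ℝ) a) (Ioc a t) := by
    rw [Set.disjoint_left]
    intro s hs1 hs2
    exact absurd hs2.1 (not_lt.2 hs1.2)
  have hsplit : ∀ ν : Measure ℝ, IsLocallyFiniteMeasure ν →
      (∫ s in Icc (0:ℝ) t, u s ∂ν) = (∫ s in Icc (0:ℝ) a, u s ∂ν) + ∫ s in Ioc a t, u s ∂ν := by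
    intro ν hν
    haveI := hν
    rw [← Set.Icc_union_Ioc_eq_Icc ha hat]
    exact setIntegral_union hdisj measurableSet_Ioc (hu.integrableOn_Icc)
      ((hu.integrableOn_Icc (a := a) (b := t)).mono_set Ioc_subset_Icc_self)
  have hE : E * (∫ s in (0:ℝ)..t, u s) - E * (∫ s in (0:ℝ)..a, u s) = E * ∫ s in a..t, u s := by
    rw [← mul_sub, intervalIntegral.integral_interval_sub_left
      (hu.intervalIntegrable 0 t) (hu.intervalIntegrable 0 a)]
  rw [hs.v_eq t, hs.v_eq a]
  unfold intRight
  rw [if_pos h0t, if_pos ha]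
  unfold SM.integOn
  rw [hsplit μ.pos hloc.1, hsplit μ.neg hloc.2, ← hE]
  ring

lemma v_inc_neg (μ : SM) (hloc : μ.LocFin) {E : ℝ} {u v : ℝ → ℝ}
    (hs : IsSolution μ E u v) (hu : Continuous u) {t a : ℝ} (hta : t ≤ a) (ha : a ≤ 0) :
    v a - v t = μ.integOn u (Ioc t a) - E * ∫ s in t..a, u s := by
  haveI := hloc.1
  haveI := hloc.2
  rcases eq_or_lt_of_le hta with rfl | hlt
  · simp [SM.integOn]
  have ht0 : t < 0 := lt_of_lt_of_le hlt ha
  have hE : E * (∫ s in (0:ℝ)..a, u s) - E * (∫ s in (0:ℝ)..t, u s) = E * ∫ s in t..a, u s := by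
    rw [← mul_sub, intervalIntegral.integral_interval_sub_left
      (hu.intervalIntegrable 0 a) (hu.intervalIntegrable 0 t)]
  rcases eq_or_lt_of_le ha with rfl | ha'
  · -- a = 0
    have hdisj : Disjoint (Ioo t (0:ℝ)) (Icc (0:ℝ) 0) := by
      rw [Set.disjoint_left]
      intro s hs1 hs2
      exact absurd hs2.1 (not_le.2 hs1.2)
    have hsplit : ∀ ν : Measure ℝ, IsLocallyFiniteMeasure ν →
        (∫ s in Ioc t (0:ℝ), u s ∂ν) =
          (∫ s in Ioo t (0:ℝ), u s ∂ν) + ∫ s in Icc (0:ℝ) 0, u s ∂ν := by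
      intro ν hν
      haveI := hν
      rw [← Set.Ioo_union_Icc_eq_Ioc ht0 le_rfl]
      exact setIntegral_union hdisj measurableSet_Icc
        ((hu.integrableOn_Icc (a := t) (b := 0)).mono_set Ioo_subset_Icc_self)
        ((hu.integrableOn_Icc (a := t) (b := 0)).mono_set
          (fun s hs => ⟨hs.1.trans' (le_of_lt ht0), hs.2⟩))
    rw [hs.v_eq 0, hs.v_eq t]
    unfold intRight
    rw [if_pos le_rfl, if_neg (not_le.2 ht0)]
    unfold SM.integOn
    rw [hsplit μ.pos hloc.1, hsplit μ.neg hloc.2, ← hE]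
    ring
  · -- a < 0
    have hdisj : Disjoint (Ioc t a) (Ioo a (0:ℝ)) := by
      rw [Set.disjoint_left]
      intro s hs1 hs2
      exact absurd hs2.1 (not_lt.2 hs1.2)
    have hsplit : ∀ ν : Measure ℝ, IsLocallyFiniteMeasure ν →
        (∫ s in Ioo t (0:ℝ), u s ∂ν) =
          (∫ s in Ioc t a, u s ∂ν) + ∫ s in Ioo a (0:ℝ), u s ∂ν := by
      intro ν hν
      haveI := hν
      rw [← Set.Ioc_union_Ioo_eq_Ioo hta ha']
      exact setIntegral_union hdisj measurableSet_Ioo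
        ((hu.integrableOn_Icc (a := t) (b := 0)).mono_set
          (fun s hs => ⟨le_of_lt hs.1, hs.2.trans (le_of_lt ha')⟩))
        ((hu.integrableOn_Icc (a := t) (b := 0)).mono_set
          (fun s hs => ⟨(hta.trans (le_of_lt hs.1)), le_of_lt hs.2⟩))
    rw [hs.v_eq a, hs.v_eq t]
    unfold intRight
    rw [if_neg (not_le.2 ha'), if_neg (not_le.2 ht0)]
    unfold SM.integOn
    rw [hsplit μ.pos hloc.1, hsplit μ.neg hloc.2, ← hE]
    ring

/-! ### Bounding the difference of the measure terms -/

lemma meas_Ioc_ne_top (ν : Measure ℝ) [IsLocallyFiniteMeasure ν] (c d : ℝ) :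
    ν (Ioc c d) ≠ ∞ := by
  have h : ν (Ioc c d) ≤ ν (Icc c d) := measure_mono Ioc_subset_Icc_self
  exact (lt_of_le_of_lt h (isCompact_Icc.measure_lt_top)).ne

lemma tvSub_le_add (a b : Measure ℝ) : tvSub a b ≤ a + b :=
  add_le_add Measure.sub_le Measure.sub_le

lemma tvDiff_self (μ : SM) : tvDiff μ μ = 0 := by
  unfold tvDiff tvSub
  simp [Measure.sub_self]

lemma tv_Ioc_toReal_le (ν : Measure ℝ) (hν : normLoc ν ≠ ⊤) {c d : ℝ} (hd : d ≤ c + 1) :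
    (ν (Ioc c d)).toReal ≤ (normLoc ν).toReal := by
  apply ENNReal.toReal_mono hν
  calc ν (Ioc c d) ≤ ν (Icc c (c + 1)) :=
        measure_mono (fun s hs => ⟨le_of_lt hs.1, hs.2.trans hd⟩)
  _ ≤ normLoc ν := le_iSup (fun y => ν (Icc y (y + 1))) c

lemma setint_add_meas (a b : Measure ℝ) [IsLocallyFiniteMeasure a] [IsLocallyFiniteMeasure b]
    (f : ℝ → ℝ) (hf : Continuous f) {c d : ℝ} :
    ∫ s in Ioc c d, f s ∂(a + b) = (∫ s in Ioc c d, f s ∂a) + ∫ s in Ioc c d, f s ∂b := by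
  rw [← integral_add_measure, Measure.restrict_add]
  · exact ((hf.integrableOn_Icc (a := c) (b := d)).mono_set Ioc_subset_Icc_self)
  · exact ((hf.integrableOn_Icc (a := c) (b := d)).mono_set Ioc_subset_Icc_self)

lemma hV_of_inc (μ1 μ2 : SM) (h1 : μ1.LocFin) (h2 : μ2.LocFin) (E : ℝ) (u1 u2 : ℝ → ℝ)
    (hu1 : Continuous u1) (hu2 : Continuous u2) {c d : ℝ} (hcd : c ≤ d) (hdc1 : d ≤ c + 1)
    (G S : ℝ) (hG0 : 0 ≤ G) (hS0 : 0 ≤ S)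
    (hGu : ∀ s ∈ Icc c d, |u1 s| ≤ G) (hSd : ∀ s ∈ Icc c d, |u1 s - u2 s| ≤ S) :
    |(μ1.integOn u1 (Ioc c d) - E * ∫ s in c..d, u1 s) -
        (μ2.integOn u2 (Ioc c d) - E * ∫ s in c..d, u2 s)| ≤
      G * ((tvDiff μ1 μ2) (Ioc c d)).toReal + (((μ2.tv) (Ioc c d)).toReal + |E|) * S := by
  haveI i1 := h1.1; haveI i2 := h1.2; haveI i3 := h2.1; haveI i4 := h2.2
  set A : Set ℝ := Ioc c d with hAdef
  have hGu' : ∀ s ∈ A, |u1 s| ≤ G := fun s hs => hGu s (Ioc_subset_Icc_self hs)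
  have hSd' : ∀ s ∈ A, |u1 s - u2 s| ≤ S := fun s hs => hSd s (Ioc_subset_Icc_self hs)
  -- Term 1 : change of measure
  have hT1 : |μ1.integOn u1 A - μ2.integOn u1 A| ≤ G * ((tvDiff μ1 μ2) A).toReal := by
    have key : μ1.integOn u1 A - μ2.integOn u1 A =
        (∫ s in A, u1 s ∂(μ1.pos + μ2.neg)) - ∫ s in A, u1 s ∂(μ2.pos + μ1.neg) := by
      unfold SM.integOn
      rw [hAdef, setint_add_meas _ _ _ hu1, setint_add_meas _ _ _ hu1]
      ring
    rw [key]
    apply abs_integral_sub_le_tvSub _ _ _ measurableSet_Ioc _ _ _ hu1 hG0 hGu'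
    · rw [Measure.add_apply]
      exact ENNReal.add_ne_top.2 ⟨meas_Ioc_ne_top _ c d, meas_Ioc_ne_top _ c d⟩
    · rw [Measure.add_apply]
      exact ENNReal.add_ne_top.2 ⟨meas_Ioc_ne_top _ c d, meas_Ioc_ne_top _ c d⟩
  -- Term 2 : change of function
  have hT2 : |μ2.integOn u1 A - μ2.integOn u2 A| ≤ S * ((μ2.tv) A).toReal := by
    have key : μ2.integOn u1 A - μ2.integOn u2 A =
        (∫ s in A, (u1 s - u2 s) ∂μ2.pos) - ∫ s in A, (u1 s - u2 s) ∂μ2.neg := by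
      unfold SM.integOn
      rw [integral_sub, integral_sub]
      · ring
      · exact ((hu1.integrableOn_Icc (a := c) (b := d)).mono_set Ioc_subset_Icc_self)
      · exact ((hu2.integrableOn_Icc (a := c) (b := d)).mono_set Ioc_subset_Icc_self)
      · exact ((hu1.integrableOn_Icc (a := c) (b := d)).mono_set Ioc_subset_Icc_self)
      · exact ((hu2.integrableOn_Icc (a := c) (b := d)).mono_set Ioc_subset_Icc_self)
    rw [key]
    exact abs_integral_sub_le_tvSub _ _ _ measurableSet_Ioc (meas_Ioc_ne_top _ c d)
      (meas_Ioc_ne_top _ c d) _ (hu1.sub hu2) hS0 hSd'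
  -- Term 3 : the E part
  have hT3 : |E * (∫ s in c..d, u1 s) - E * ∫ s in c..d, u2 s| ≤ |E| * S := by
    rw [← mul_sub, abs_mul]
    have h4 : (∫ s in c..d, u1 s) - ∫ s in c..d, u2 s = ∫ s in c..d, (u1 s - u2 s) := by
      rw [intervalIntegral.integral_sub (hu1.intervalIntegrable c d)
        (hu2.intervalIntegrable c d)]
    rw [h4]
    have h5 : ‖∫ s in c..d, (u1 s - u2 s)‖ ≤ S * |d - c| := by
      apply intervalIntegral.norm_integral_le_of_norm_le_const
      intro s hsx
      have hsx' : s ∈ Icc c d := by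
        rw [Set.uIoc_of_le hcd] at hsx
        exact Ioc_subset_Icc_self hsx
      rw [Real.norm_eq_abs]
      exact hSd s hsx'
    rw [Real.norm_eq_abs] at h5
    have h6 : |d - c| ≤ 1 := by
      rw [abs_of_nonneg (by linarith)]
      linarith
    have h7 : |(∫ s in c..d, (u1 s - u2 s))| ≤ S := by nlinarith [abs_nonneg (d - c)]
    exact mul_le_mul_of_nonneg_left h7 (abs_nonneg E)
  have e1 : (μ1.integOn u1 A - E * ∫ s in c..d, u1 s) -
      (μ2.integOn u2 A - E * ∫ s in c..d, u2 s) =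
      ((μ1.integOn u1 A - μ2.integOn u1 A) + (μ2.integOn u1 A - μ2.integOn u2 A)) -
        (E * (∫ s in c..d, u1 s) - E * ∫ s in c..d, u2 s) := by ring
  rw [e1]
  have e2 := abs_sub ((μ1.integOn u1 A - μ2.integOn u1 A) + (μ2.integOn u1 A - μ2.integOn u2 A))
    (E * (∫ s in c..d, u1 s) - E * ∫ s in c..d, u2 s)
  have e3 := abs_add_le (μ1.integOn u1 A - μ2.integOn u1 A) (μ2.integOn u1 A - μ2.integOn u2 A)
  nlinarith [hT1, hT2, hT3]

lemma sqrt_sq_add_sq_le (p q : ℝ) : Real.sqrt (p ^ 2 + q ^ 2) ≤ |p| + |q| := by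
  rw [show p ^ 2 + q ^ 2 = |p| ^ 2 + |q| ^ 2 by rw [sq_abs, sq_abs]]
  have h : |p| ^ 2 + |q| ^ 2 ≤ (|p| + |q|) ^ 2 := by nlinarith [abs_nonneg p, abs_nonneg q]
  calc Real.sqrt (|p| ^ 2 + |q| ^ 2) ≤ Real.sqrt ((|p| + |q|) ^ 2) := Real.sqrt_le_sqrt h
  _ = |p| + |q| := Real.sqrt_sq (by positivity)


lemma tvDiff_Icc_ne_top (μ1 μ2 : SM) (h1 : μ1.LocFin) (h2 : μ2.LocFin) (c d : ℝ) :
    (tvDiff μ1 μ2) (Icc c d) ≠ ⊤ := by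
  haveI := h1.1; haveI := h1.2; haveI := h2.1; haveI := h2.2
  have hle : (tvDiff μ1 μ2) (Icc c d) ≤
      ((μ1.pos + μ2.neg) + (μ2.pos + μ1.neg)) (Icc c d) :=
    Measure.le_iff'.mp (tvSub_le_add (μ1.pos + μ2.neg) (μ2.pos + μ1.neg)) (Icc c d)
  have hfin : ((μ1.pos + μ2.neg) + (μ2.pos + μ1.neg)) (Icc c d) < ⊤ := by
    simp only [Measure.add_apply]
    have hc := isCompact_Icc (a := c) (b := d)
    exact ENNReal.add_lt_top.2 ⟨ENNReal.add_lt_top.2 ⟨hc.measure_lt_top, hc.measure_lt_top⟩,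
      ENNReal.add_lt_top.2 ⟨hc.measure_lt_top, hc.measure_lt_top⟩⟩
  exact (lt_of_le_of_lt hle hfin).ne

lemma abs_le_one_of_norm (p q : ℝ) (h : p ^ 2 + q ^ 2 = 1) : |p| ≤ 1 := by
  nlinarith [abs_nonneg p, sq_abs p, sq_nonneg q]

end GP

set_option maxHeartbeats 4000000 in
/-- Let `μ` be a Gordon measure with `p_m`-periodic
approximants `μ^m`, and let `(u,v)`, `(u_m,v_m)` be solutions for `μ`, `μ^m`
with the same normalized initial data at `0`. Then there is `C ≥ 0`,
independent of `m`, with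
`‖(u - u_m, v - v_m)(x)‖ ≤ C e^{C|x|} |μ - μ^m|(I_x)` for all `x`. -/
theorem gordon_approximation_estimate (μ : SM) (hloc : μ.LocFin)
    (hub : UnifLocBounded μ.tv)
    (μs : ℕ → SM) (p : ℕ → ℝ)
    (hmloc : ∀ m, (μs m).LocFin) (hp : ∀ m, 0 < p m)
    (hper : ∀ m, (μs m).IsPeriodic (p m))
    (hmub : ∀ m, UnifLocBounded (μs m).tv)
    (hsup : ∃ M : ℝ≥0∞, M < ⊤ ∧ ∀ m, normLoc (μs m).tv ≤ M)
    (hptop : Tendsto p atTop atTop)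
    (happ : ∀ C : ℝ, Tendsto (fun m => Real.exp (C * p m) *
        ((tvDiff μ (μs m)) (Set.Icc (-(p m)) (2 * p m))).toReal) atTop (nhds 0))
    (E : ℝ) (u v : ℝ → ℝ) (hs : IsSolution μ E u v)
    (um vm : ℕ → ℝ → ℝ) (hsm : ∀ m, IsSolution (μs m) E (um m) (vm m))
    (h0u : ∀ m, um m 0 = u 0) (h0v : ∀ m, vm m 0 = v 0)
    (hnorm : (u 0) ^ 2 + (v 0) ^ 2 = 1) :
    ∃ C : ℝ, 0 ≤ C ∧ ∀ m : ℕ, ∀ x : ℝ,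
      Real.sqrt ((u x - um m x) ^ 2 + (v x - vm m x) ^ 2) ≤
        C * Real.exp (C * |x|) * ((tvDiff μ (μs m)) (Ix x)).toReal := by
  classical
  obtain ⟨M, hMlt, hMle⟩ := hsup
  have huc : Continuous u := GP.sol_cont hs
  have humc : ∀ m', Continuous (um m') := fun m' => GP.sol_cont (hsm m')
  set Mm : ℝ := (normLoc μ.tv).toReal with hMm
  set MM : ℝ := M.toReal with hMM
  have hMm0 : 0 ≤ Mm := ENNReal.toReal_nonneg
  have hMM0 : 0 ≤ MM := ENNReal.toReal_nonneg
  set B1 : ℝ := Mm + |E| with hB1def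
  set B2 : ℝ := MM + |E| with hB2def
  have hB10 : 0 ≤ B1 := by positivity
  have hB20 : 0 ≤ B2 := by positivity
  have hKB1 : 1 ≤ GP.KK B1 := GP.KK_ge_one hB10
  have hKB2 : 1 ≤ GP.KK B2 := GP.KK_ge_one hB20
  set L : ℝ := (2 * GP.KK B1) * (2 * GP.KK B2) with hLdef
  have hL1 : 1 ≤ L := by nlinarith
  have hL0 : (0:ℝ) < L := by linarith
  set C : ℝ := max (2 * L ^ 2) (Real.log L) with hCdef
  have hC0 : 0 ≤ C := le_trans (by nlinarith) (le_max_left _ _)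
  have key : ∀ y : ℝ, 0 ≤ y → 2 * L ^ (⌈y⌉₊ + 1) ≤ C * Real.exp (C * y) := by
    intro y hy
    have h1 : ((⌈y⌉₊ + 1 : ℕ) : ℝ) ≤ y + 2 := by
      push_cast
      have := Nat.ceil_lt_add_one hy
      linarith
    have h2 : (L : ℝ) ^ (⌈y⌉₊ + 1) ≤ L ^ (y + 2 : ℝ) := by
      rw [← Real.rpow_natCast L (⌈y⌉₊ + 1)]
      exact Real.rpow_le_rpow_of_exponent_le hL1 h1
    have h3 : L ^ (y + 2 : ℝ) = L ^ (y : ℝ) * L ^ 2 := by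
      rw [Real.rpow_add hL0]
      congr 1
      rw [show ((2:ℝ)) = ((2:ℕ):ℝ) by norm_num, Real.rpow_natCast]
    have h4 : L ^ (y : ℝ) = Real.exp (Real.log L * y) := Real.rpow_def_of_pos hL0 y
    have h5 : Real.exp (Real.log L * y) ≤ Real.exp (C * y) :=
      Real.exp_le_exp.2 (mul_le_mul_of_nonneg_right (le_max_right _ _) hy)
    have hcc : 2 * L ^ 2 ≤ C := le_max_left _ _
    have hep : (0:ℝ) < Real.exp (Real.log L * y) := Real.exp_pos _
    have hep2 : (0:ℝ) < Real.exp (C * y) := Real.exp_pos _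
    have hL2 : (0:ℝ) < L ^ 2 := by positivity
    calc 2 * L ^ (⌈y⌉₊ + 1) ≤ 2 * L ^ (y + 2 : ℝ) := by linarith
    _ = 2 * L ^ 2 * Real.exp (Real.log L * y) := by rw [h3, h4]; ring
    _ ≤ C * Real.exp (C * y) := by nlinarith
  have hIoc_tvm : ∀ (m' : ℕ) (c d : ℝ), d ≤ c + 1 →
      (((μs m').tv) (Ioc c d)).toReal ≤ MM := by
    intro m' c d h
    calc (((μs m').tv) (Ioc c d)).toReal ≤ (normLoc ((μs m').tv)).toReal :=
          GP.tv_Ioc_toReal_le _ (hmub m').ne h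
    _ ≤ MM := ENNReal.toReal_mono hMlt.ne (hMle m')
  have hIoc_tvμ : ∀ c d : ℝ, d ≤ c + 1 → ((μ.tv) (Ioc c d)).toReal ≤ Mm :=
    fun c d h => GP.tv_Ioc_toReal_le _ hub.ne h
  have hu01 : |u 0| ≤ 1 := GP.abs_le_one_of_norm _ _ hnorm
  have hv01 : |v 0| ≤ 1 := by
    have := GP.abs_le_one_of_norm (v 0) (u 0) (by linarith)
    exact this
  refine ⟨C, hC0, ?_⟩
  intro m x
  -- common single-system hV bound (for an interval Ioc c d with c ≤ d ≤ c+1)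
  have hsingle : ∀ c d : ℝ, c ≤ d → d ≤ c + 1 → ∀ S : ℝ, 0 ≤ S →
      (∀ s ∈ Icc c d, |u s| ≤ S) →
      |μ.integOn u (Ioc c d) - E * ∫ s in c..d, u s| ≤ B1 * S := by
    intro c d hcd hdc1 S hS0 hSb
    have h0 := GP.hV_of_inc μ μ hloc hloc E u (fun _ => 0) huc continuous_const hcd hdc1
      S S hS0 hS0 hSb (by simpa using hSb)
    have hz1 : μ.integOn (fun _ => 0) (Ioc c d) = 0 := by
      unfold SM.integOn; simp
    have hz2 : (∫ s in c..d, (0:ℝ)) = 0 := by simp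
    rw [hz1, hz2] at h0
    have hz3 : ((tvDiff μ μ) (Ioc c d)).toReal = 0 := by
      rw [GP.tvDiff_self]; simp
    rw [hz3] at h0
    have h4 : ((μ.tv) (Ioc c d)).toReal + |E| ≤ B1 :=
      add_le_add (hIoc_tvμ c d hdc1) le_rfl
    calc |μ.integOn u (Ioc c d) - E * ∫ s in c..d, u s|
        = |(μ.integOn u (Ioc c d) - E * ∫ s in c..d, u s) - (0 - E * 0)| := by
          norm_num
    _ ≤ S * 0 + (((μ.tv) (Ioc c d)).toReal + |E|) * S := h0
    _ ≤ B1 * S := by nlinarith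
  -- two-system hV bound
  have hdouble : ∀ c d : ℝ, c ≤ d → d ≤ c + 1 → ∀ G S : ℝ, 0 ≤ G → 0 ≤ S →
      (∀ s ∈ Icc c d, |u s| ≤ G) → (∀ s ∈ Icc c d, |u s - um m s| ≤ S) →
      |(μ.integOn u (Ioc c d) - E * ∫ s in c..d, u s) -
        ((μs m).integOn (um m) (Ioc c d) - E * ∫ s in c..d, um m s)| ≤
      G * ((tvDiff μ (μs m)) (Ioc c d)).toReal + B2 * S := by
    intro c d hcd hdc1 G S hG0 hS0 hGu hSb
    have h0 := GP.hV_of_inc μ (μs m) hloc (hmloc m) E u (um m) huc (humc m) hcd hdc1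
      G S hG0 hS0 hGu hSb
    have h4 : (((μs m).tv) (Ioc c d)).toReal + |E| ≤ B2 :=
      add_le_add (hIoc_tvm m c d hdc1) le_rfl
    calc |(μ.integOn u (Ioc c d) - E * ∫ s in c..d, u s) -
        ((μs m).integOn (um m) (Ioc c d) - E * ∫ s in c..d, um m s)|
        ≤ G * ((tvDiff μ (μs m)) (Ioc c d)).toReal +
          ((((μs m).tv) (Ioc c d)).toReal + |E|) * S := h0
    _ ≤ G * ((tvDiff μ (μs m)) (Ioc c d)).toReal + B2 * S := by nlinarith
  rcases le_or_gt 0 x with hx | hx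
  · -- forward case
    have hIx : Ix x = Icc 0 x := by rw [Ix, min_eq_right hx, max_eq_left hx]
    set η : ℝ := ((tvDiff μ (μs m)) (Icc 0 x)).toReal with hηdef
    have hη0 : 0 ≤ η := ENNReal.toReal_nonneg
    have hηfin : (tvDiff μ (μs m)) (Icc 0 x) ≠ ⊤ :=
      GP.tvDiff_Icc_ne_top μ (μs m) hloc (hmloc m) 0 x
    have hsubIoc : ∀ a t : ℝ, 0 ≤ a → t ≤ x → Ioc a t ⊆ Icc 0 x := by
      intro a t ha htx s hsx
      exact ⟨le_of_lt (lt_of_le_of_lt ha hsx.1), hsx.2.trans htx⟩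
    -- first core application : bound on (u, v)
    have hV1 : ∀ a t : ℝ, 0 ≤ a → a ≤ t → t ≤ x → t ≤ a + 1 →
        ∀ S : ℝ, 0 ≤ S → (∀ s ∈ Icc a t, |u s| ≤ S) → |v t - v a| ≤ 0 + B1 * S := by
      intro a t ha hat htx hta S hS0 hSb
      have hinc := GP.v_inc_pos μ hloc hs huc ha hat
      rw [hinc]
      simpa using hsingle a t hat hta S hS0 hSb
    have hcore1 := GP.core x u v (GP.sol_vint hs) hs.u_eq 0 B1 le_rfl hB10 hV1
    set G : ℝ := 2 * (2 * GP.KK B1) ^ (⌈x⌉₊ + 1) with hGdef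
    have hP1 : (1:ℝ) ≤ (2 * GP.KK B1) ^ (⌈x⌉₊ + 1) := one_le_pow₀ (by nlinarith)
    have hG0 : 0 ≤ G := by positivity
    have hGbound : ∀ s : ℝ, 0 ≤ s → s ≤ x → |u s| ≤ G := by
      intro s h1 h2
      have h := hcore1 s h1 h2
      have h3 : |u 0| + |v 0| + 0 ≤ 2 := by linarith
      have h4 : (|u 0| + |v 0| + 0) * (2 * GP.KK B1) ^ (⌈x⌉₊ + 1) ≤ G := by
        rw [hGdef]
        exact mul_le_mul_of_nonneg_right h3 (by positivity)
      have h5 : 0 ≤ |v s| := abs_nonneg _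
      linarith
    -- second core application : bound on the difference
    have hU2 : ∀ t : ℝ, u t - um m t = (u 0 - um m 0) + ∫ s in (0:ℝ)..t, (v s - vm m s) := by
      intro t
      rw [intervalIntegral.integral_sub (GP.sol_vint hs 0 t) (GP.sol_vint (hsm m) 0 t),
        hs.u_eq t, (hsm m).u_eq t]
      ring
    have hV2 : ∀ a t : ℝ, 0 ≤ a → a ≤ t → t ≤ x → t ≤ a + 1 →
        ∀ S : ℝ, 0 ≤ S → (∀ s ∈ Icc a t, |u s - um m s| ≤ S) →
        |(v t - vm m t) - (v a - vm m a)| ≤ G * η + B2 * S := by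
      intro a t ha hat htx hta S hS0 hSb
      have hinc1 := GP.v_inc_pos μ hloc hs huc ha hat
      have hinc2 := GP.v_inc_pos (μs m) (hmloc m) (hsm m) (humc m) ha hat
      have heq : (v t - vm m t) - (v a - vm m a) =
          (μ.integOn u (Ioc a t) - E * ∫ s in a..t, u s) -
            ((μs m).integOn (um m) (Ioc a t) - E * ∫ s in a..t, um m s) := by
        rw [← hinc1, ← hinc2]; ring
      have hGu : ∀ s ∈ Icc a t, |u s| ≤ G :=
        fun s hsx => hGbound s (ha.trans hsx.1) (hsx.2.trans htx)
      have h0 := hdouble a t hat hta G S hG0 hS0 hGu hSb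
      have hmono : ((tvDiff μ (μs m)) (Ioc a t)).toReal ≤ η :=
        ENNReal.toReal_mono hηfin (measure_mono (hsubIoc a t ha htx))
      calc |(v t - vm m t) - (v a - vm m a)| ≤
          G * ((tvDiff μ (μs m)) (Ioc a t)).toReal + B2 * S := by rw [heq]; exact h0
      _ ≤ G * η + B2 * S := by nlinarith
    have hcore2 := GP.core x (fun s => u s - um m s) (fun s => v s - vm m s)
      (fun a b => (GP.sol_vint hs a b).sub (GP.sol_vint (hsm m) a b)) hU2 (G * η) B2
      (by positivity) hB20 hV2
    have hfinal := hcore2 x hx le_rfl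
    have hz : |u 0 - um m 0| + |v 0 - vm m 0| = 0 := by
      rw [h0u m, h0v m]; simp
    rw [hIx, ← hηdef]
    calc Real.sqrt ((u x - um m x) ^ 2 + (v x - vm m x) ^ 2) ≤
        |u x - um m x| + |v x - vm m x| := GP.sqrt_sq_add_sq_le _ _
    _ ≤ (|u 0 - um m 0| + |v 0 - vm m 0| + G * η) * (2 * GP.KK B2) ^ (⌈x⌉₊ + 1) := hfinal
    _ = 2 * ((2 * GP.KK B1) ^ (⌈x⌉₊ + 1) * (2 * GP.KK B2) ^ (⌈x⌉₊ + 1)) * η := by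
        rw [hz, hGdef]; ring
    _ = 2 * L ^ (⌈x⌉₊ + 1) * η := by
        rw [hLdef, show (2 * GP.KK B1 * (2 * GP.KK B2)) ^ (⌈x⌉₊ + 1) =
          (2 * GP.KK B1) ^ (⌈x⌉₊ + 1) * (2 * GP.KK B2) ^ (⌈x⌉₊ + 1) from mul_pow _ _ _]
    _ ≤ C * Real.exp (C * |x|) * η := by
        rw [abs_of_nonneg hx]
        exact mul_le_mul_of_nonneg_right (key x hx) hη0
  · -- backward case
    have hx' : x ≤ 0 := le_of_lt hx
    set y : ℝ := -x with hydef
    have hy : 0 ≤ y := by rw [hydef]; linarith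
    have hIx : Ix x = Icc x 0 := by rw [Ix, min_eq_left hx', max_eq_right hx']
    set η : ℝ := ((tvDiff μ (μs m)) (Icc x 0)).toReal with hηdef
    have hη0 : 0 ≤ η := ENNReal.toReal_nonneg
    have hηfin : (tvDiff μ (μs m)) (Icc x 0) ≠ ⊤ :=
      GP.tvDiff_Icc_ne_top μ (μs m) hloc (hmloc m) x 0
    have hsubIoc : ∀ a t : ℝ, 0 ≤ a → t ≤ y → Ioc (-t) (-a) ⊆ Icc x 0 := by
      intro a t ha hty s hsx
      constructor
      · have : -t ≥ x := by rw [hydef] at hty; linarith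
        linarith [hsx.1]
      · linarith [hsx.2, ha]
    have hrefl_int : ∀ w : ℝ → ℝ, (∀ a b : ℝ, IntervalIntegrable w volume a b) →
        ∀ a b : ℝ, IntervalIntegrable (fun s => -w (-s)) volume a b := by
      intro w hw a b
      have h := (IntervalIntegrable.iff_comp_neg (f := w) (a := -a) (b := -b)).mp (hw (-a) (-b))
      simp only [neg_neg] at h
      exact h.neg
    have hrefl_prim : ∀ (w z : ℝ → ℝ), (∀ a b : ℝ, IntervalIntegrable z volume a b) →
        (∀ t : ℝ, w t = w 0 + ∫ s in (0:ℝ)..t, z s) →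
        ∀ t : ℝ, w (-t) = w (-(0:ℝ)) + ∫ s in (0:ℝ)..t, -z (-s) := by
      intro w z hz hw t
      rw [neg_zero, hw (-t), intervalIntegral.integral_neg,
        intervalIntegral.integral_comp_neg (a := (0:ℝ)) (b := t) (f := z), neg_zero,
        intervalIntegral.integral_symm]
    -- first core application on the reflected pair
    have hVr1 : ∀ a t : ℝ, 0 ≤ a → a ≤ t → t ≤ y → t ≤ a + 1 →
        ∀ S : ℝ, 0 ≤ S → (∀ s ∈ Icc a t, |u (-s)| ≤ S) →
        |(-v (-t)) - (-v (-a))| ≤ 0 + B1 * S := by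
      intro a t ha hat hty hta S hS0 hSb
      have hcd : -t ≤ -a := by linarith
      have hd0 : -a ≤ 0 := by linarith
      have hdc1 : -a ≤ -t + 1 := by linarith
      have hinc := GP.v_inc_neg μ hloc hs huc hcd hd0
      have heq : (-v (-t)) - (-v (-a)) = v (-a) - v (-t) := by ring
      rw [heq, hinc]
      have hSb' : ∀ s ∈ Icc (-t) (-a), |u s| ≤ S := by
        intro s hsx
        have h := hSb (-s) ⟨by linarith [hsx.2], by linarith [hsx.1]⟩
        simpa using h
      simpa using hsingle (-t) (-a) hcd hdc1 S hS0 hSb'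
    have hcore1 := GP.core y (fun s => u (-s)) (fun s => -v (-s))
      (hrefl_int v (GP.sol_vint hs))
      (fun t => hrefl_prim u v (GP.sol_vint hs) hs.u_eq t) 0 B1 le_rfl hB10 hVr1
    set G : ℝ := 2 * (2 * GP.KK B1) ^ (⌈y⌉₊ + 1) with hGdef
    have hP1 : (1:ℝ) ≤ (2 * GP.KK B1) ^ (⌈y⌉₊ + 1) := one_le_pow₀ (by nlinarith)
    have hG0 : 0 ≤ G := by positivity
    have hGbound : ∀ s : ℝ, x ≤ s → s ≤ 0 → |u s| ≤ G := by
      intro s h1 h2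
      have h := hcore1 (-s) (by linarith) (by rw [hydef]; linarith)
      simp only [neg_neg, neg_zero] at h
      have h3 : |u 0| + |-v 0| + 0 ≤ 2 := by rw [abs_neg]; linarith
      have h4 : (|u 0| + |-v 0| + 0) * (2 * GP.KK B1) ^ (⌈y⌉₊ + 1) ≤ G := by
        rw [hGdef]
        exact mul_le_mul_of_nonneg_right h3 (by positivity)
      have h5 : 0 ≤ |-v s| := abs_nonneg _
      linarith
    -- second core application on the reflected difference
    have hUr2 : ∀ t : ℝ, u (-t) - um m (-t) =
        (u (-(0:ℝ)) - um m (-(0:ℝ))) + ∫ s in (0:ℝ)..t, -(v (-s) - vm m (-s)) := by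
      intro t
      have h1 := hrefl_prim u v (GP.sol_vint hs) hs.u_eq t
      have h2 := hrefl_prim (um m) (vm m) (GP.sol_vint (hsm m)) (hsm m).u_eq t
      have h3 : (∫ s in (0:ℝ)..t, -(v (-s) - vm m (-s))) =
          (∫ s in (0:ℝ)..t, -v (-s)) - ∫ s in (0:ℝ)..t, -vm m (-s) := by
        rw [← intervalIntegral.integral_sub (hrefl_int v (GP.sol_vint hs) 0 t)
          (hrefl_int (vm m) (GP.sol_vint (hsm m)) 0 t)]
        congr 1
        funext s
        ring
      rw [h3, h1, h2]
      ring
    have hVr2 : ∀ a t : ℝ, 0 ≤ a → a ≤ t → t ≤ y → t ≤ a + 1 →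
        ∀ S : ℝ, 0 ≤ S → (∀ s ∈ Icc a t, |u (-s) - um m (-s)| ≤ S) →
        |(-(v (-t) - vm m (-t))) - (-(v (-a) - vm m (-a)))| ≤ G * η + B2 * S := by
      intro a t ha hat hty hta S hS0 hSb
      have hcd : -t ≤ -a := by linarith
      have hd0 : -a ≤ 0 := by linarith
      have hdc1 : -a ≤ -t + 1 := by linarith
      have hinc1 := GP.v_inc_neg μ hloc hs huc hcd hd0
      have hinc2 := GP.v_inc_neg (μs m) (hmloc m) (hsm m) (humc m) hcd hd0
      have heq : (-(v (-t) - vm m (-t))) - (-(v (-a) - vm m (-a))) =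
          (v (-a) - v (-t)) - (vm m (-a) - vm m (-t)) := by ring
      have heq2 : (v (-a) - v (-t)) - (vm m (-a) - vm m (-t)) =
          (μ.integOn u (Ioc (-t) (-a)) - E * ∫ s in (-t)..(-a), u s) -
            ((μs m).integOn (um m) (Ioc (-t) (-a)) -
              E * ∫ s in (-t)..(-a), um m s) := by
        rw [← hinc1, ← hinc2]
      have hGu : ∀ s ∈ Icc (-t) (-a), |u s| ≤ G := by
        intro s hsx
        apply hGbound s
        · have : -t ≥ x := by rw [hydef] at hty; linarith
          linarith [hsx.1]
        · linarith [hsx.2]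
      have hSb' : ∀ s ∈ Icc (-t) (-a), |u s - um m s| ≤ S := by
        intro s hsx
        have h := hSb (-s) ⟨by linarith [hsx.2], by linarith [hsx.1]⟩
        simpa using h
      have h0 := hdouble (-t) (-a) hcd hdc1 G S hG0 hS0 hGu hSb'
      have hmono : ((tvDiff μ (μs m)) (Ioc (-t) (-a))).toReal ≤ η :=
        ENNReal.toReal_mono hηfin (measure_mono (hsubIoc a t ha hty))
      calc |(-(v (-t) - vm m (-t))) - (-(v (-a) - vm m (-a)))| =
          |(μ.integOn u (Ioc (-t) (-a)) - E * ∫ s in (-t)..(-a), u s) -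
            ((μs m).integOn (um m) (Ioc (-t) (-a)) -
              E * ∫ s in (-t)..(-a), um m s)| := by rw [heq, heq2]
      _ ≤ G * ((tvDiff μ (μs m)) (Ioc (-t) (-a))).toReal + B2 * S := h0
      _ ≤ G * η + B2 * S := by nlinarith
    have hcore2 := GP.core y (fun s => u (-s) - um m (-s))
      (fun s => -(v (-s) - vm m (-s)))
      (hrefl_int _ (fun a b => (GP.sol_vint hs a b).sub (GP.sol_vint (hsm m) a b))) hUr2
      (G * η) B2 (by positivity) hB20 hVr2
    have hfinal := hcore2 y hy le_rfl
    simp only [neg_neg, neg_zero] at hfinal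
    have hyx : -y = x := by rw [hydef]; ring
    rw [hyx] at hfinal
    have hz : |u 0 - um m 0| + |-(v 0 - vm m 0)| = 0 := by
      rw [h0u m, h0v m]; simp
    rw [hIx, ← hηdef]
    calc Real.sqrt ((u x - um m x) ^ 2 + (v x - vm m x) ^ 2) ≤
        |u x - um m x| + |v x - vm m x| := GP.sqrt_sq_add_sq_le _ _
    _ = |u x - um m x| + |-(v x - vm m x)| := by rw [abs_neg]
    _ ≤ (|u 0 - um m 0| + |-(v 0 - vm m 0)| + G * η) * (2 * GP.KK B2) ^ (⌈y⌉₊ + 1) := hfinal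
    _ = 2 * ((2 * GP.KK B1) ^ (⌈y⌉₊ + 1) * (2 * GP.KK B2) ^ (⌈y⌉₊ + 1)) * η := by
        rw [hz, hGdef]; ring
    _ = 2 * L ^ (⌈y⌉₊ + 1) * η := by
        rw [hLdef, show (2 * GP.KK B1 * (2 * GP.KK B2)) ^ (⌈y⌉₊ + 1) =
          (2 * GP.KK B1) ^ (⌈y⌉₊ + 1) * (2 * GP.KK B2) ^ (⌈y⌉₊ + 1) from mul_pow _ _ _]
    _ ≤ C * Real.exp (C * |x|) * η := by
        rw [abs_of_neg hx, ← hydef]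
        exact mul_le_mul_of_nonneg_right (key y hy) hη0
end

section
/- Let v ∈ L²(ℝ) be a function of locally bounded variation such that for every r > 0, |v(x) − v(x+r)| → 0 as |x| → ∞. Then |v(x)| → 0 as |x| → ∞. -/
open MeasureTheory Filter Set Real
open scoped ENNReal

lemma min_abs_triangle' (a b : ℝ) : min |a| 1 ≤ min |a - b| 1 + min |b| 1 := by
  have h1 : (0:ℝ) ≤ min |a - b| 1 := le_min (abs_nonneg _) zero_le_one
  have h2 : (0:ℝ) ≤ min |b| 1 := le_min (abs_nonneg _) zero_le_one
  rcases le_total |a - b| 1 with hab | hab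
  · rcases le_total |b| 1 with hb | hb
    · rw [min_eq_left hab, min_eq_left hb]
      calc min |a| 1 ≤ |a| := min_le_left _ _
        _ = |(a - b) + b| := by ring_nf
        _ ≤ |a - b| + |b| := abs_add_le _ _
    · rw [min_eq_right hb]
      linarith [min_le_right |a| (1:ℝ)]
  · rw [min_eq_right hab]
    linarith [min_le_right |a| (1:ℝ)]

lemma min_abs_le_eps' {ε : ℝ} (hε : 0 < ε) (a : ℝ) : min |a| 1 ≤ ε + a ^ 2 / ε := by
  rcases le_total |a| ε with h | h
  · have h2 : (0:ℝ) ≤ a ^ 2 / ε := div_nonneg (sq_nonneg a) hε.le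
    linarith [min_le_left |a| (1:ℝ)]
  · have h2 : |a| ≤ a ^ 2 / ε := by
      rw [le_div_iff₀ hε]
      nlinarith [sq_abs a, abs_nonneg a]
    linarith [min_le_left |a| (1:ℝ)]

/-- If `v ∈ L²(ℝ)` has locally bounded variation and
`|v(x) - v(x+r)| → 0` as `|x| → ∞` for every `r > 0`, then `|v(x)| → 0` as
`|x| → ∞`. -/
theorem tendsto_zero_of_L2_BVloc (v : ℝ → ℝ) (hL2 : MemLp v 2 volume)
    (hBV : LocallyBoundedVariationOn v Set.univ)
    (h : ∀ r : ℝ, 0 < r →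
      Tendsto (fun x => |v x - v (x + r)|) (Filter.cocompact ℝ) (nhds 0)) :
    Tendsto (fun x => |v x|) (Filter.cocompact ℝ) (nhds 0) := by
  obtain ⟨g, hg_sm, hvg⟩ := hL2.aestronglyMeasurable
  set μ0 : Measure ℝ := volume.restrict (Set.Ioc (0:ℝ) 1) with hμ0
  haveI hfin : IsFiniteMeasure μ0 := by
    constructor
    rw [hμ0, Measure.restrict_apply_univ, Real.volume_Ioc]
    exact ENNReal.ofReal_lt_top
  -- a.e. equality after translation
  have hae : ∀ x : ℝ, ∀ᵐ r ∂μ0, v (x + r) = g (x + r) := by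
    intro x
    refine ae_restrict_of_ae ?_
    have hnull : volume ((fun r : ℝ => x + r) ⁻¹' {y | ¬ v y = g y}) = 0 :=
      (measurePreserving_add_left volume x).quasiMeasurePreserving.preimage_null
        (ae_iff.mp hvg)
    exact ae_iff.mpr hnull
  have haes : ∀ x : ℝ, AEStronglyMeasurable (fun r => v (x + r)) μ0 := fun x =>
    ⟨fun r => g (x + r), hg_sm.comp_measurable (measurable_const_add x), hae x⟩
  have haem : ∀ x : ℝ, AEMeasurable (fun r => v (x + r)) μ0 := fun x => (haes x).aemeasurable
  -- integrability facts
  have hbdd_int : ∀ f : ℝ → ℝ, AEStronglyMeasurable f μ0 → (∀ r, ‖f r‖ ≤ 1) → Integrable f μ0 :=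
    fun f hf hb => (integrable_const (1:ℝ)).mono' hf (Eventually.of_forall hb)
  have hnorm_min : ∀ t : ℝ, ‖min |t| 1‖ ≤ 1 := by
    intro t
    rw [Real.norm_eq_abs, abs_of_nonneg (le_min (abs_nonneg _) zero_le_one)]
    exact min_le_right _ _
  have hintA : ∀ x : ℝ, Integrable (fun r => min |v x - v (x + r)| 1) μ0 := by
    intro x
    refine hbdd_int _ ?_ (fun r => hnorm_min _)
    exact ((measurable_abs.comp_aemeasurable (aemeasurable_const.sub (haem x))).min aemeasurable_const).aestronglyMeasurable
  have hintB : ∀ x : ℝ, Integrable (fun r => min |v (x + r)| 1) μ0 := by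
    intro x
    refine hbdd_int _ ?_ (fun r => hnorm_min _)
    exact ((measurable_abs.comp_aemeasurable (haem x)).min aemeasurable_const).aestronglyMeasurable
  have hIsq : Integrable (fun y => (v y) ^ 2) volume := hL2.integrable_sq
  have hintT : ∀ x : ℝ, Integrable (fun r => (v (x + r)) ^ 2) μ0 := fun x =>
    (hIsq.comp_add_left x).restrict
  -- key pointwise inequality
  have key : ∀ x : ℝ, min |v x| 1 ≤
      (∫ r in Set.Ioc (0:ℝ) 1, min |v x - v (x + r)| 1) +
      ∫ r in Set.Ioc (0:ℝ) 1, min |v (x + r)| 1 := by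
    intro x
    have h1 : min |v x| 1 = ∫ _r in Set.Ioc (0:ℝ) 1, min |v x| 1 := by
      rw [setIntegral_const, Real.volume_real_Ioc]
      norm_num
    rw [h1, ← integral_add (hintA x) (hintB x)]
    exact integral_mono (integrable_const _) ((hintA x).add (hintB x))
      (fun r => min_abs_triangle' (v x) (v (x + r)))
  -- first term tends to zero
  haveI hccg : (Filter.cocompact ℝ).IsCountablyGenerated := by
    rw [cocompact_eq_atBot_atTop]; infer_instance
  have hA : Tendsto (fun x => ∫ r in Set.Ioc (0:ℝ) 1, min |v x - v (x + r)| 1)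
      (cocompact ℝ) (nhds 0) := by
    refine tendsto_iff_seq_tendsto.mpr fun u hu => ?_
    have hdct := tendsto_integral_of_dominated_convergence (μ := μ0)
      (F := fun n r => min |v (u n) - v (u n + r)| 1) (f := fun _ => (0:ℝ))
      (bound := fun _ => (1:ℝ))
      (fun n => (hintA (u n)).aestronglyMeasurable)
      (integrable_const 1)
      (fun n => Eventually.of_forall fun r => hnorm_min _)
      ?_
    · simpa [hμ0, Function.comp_def] using hdct
    · filter_upwards [ae_restrict_mem measurableSet_Ioc] with r hr
      have htend : Tendsto (fun n => |v (u n) - v (u n + r)|) atTop (nhds 0) :=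
        (h r hr.1).comp hu
      exact squeeze_zero (fun n => le_min (abs_nonneg _) zero_le_one)
        (fun n => min_le_left _ _) htend
  -- translation identity for the tail integral
  have hTeq : ∀ x : ℝ, (∫ r in Set.Ioc (0:ℝ) 1, (v (x + r)) ^ 2) =
      ∫ y in Set.Ioc x (x + 1), (v y) ^ 2 := by
    intro x
    rw [← intervalIntegral.integral_of_le (zero_le_one : (0:ℝ) ≤ 1),
      ← intervalIntegral.integral_of_le (by linarith : x ≤ x + 1)]
    simpa using intervalIntegral.integral_comp_add_left (a := (0:ℝ)) (b := 1)
      (fun y => (v y) ^ 2) x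
  -- tail smallness
  have htail : ∀ ε : ℝ, 0 < ε →
      ∀ᶠ x in cocompact ℝ, (∫ y in Set.Ioc x (x + 1), (v y) ^ 2) < ε := by
    intro ε hε
    have hUnion : (⋃ n : ℕ, Set.Icc (-(n:ℝ)) n) = Set.univ := by
      ext y
      simp only [Set.mem_iUnion, Set.mem_Icc, Set.mem_univ, iff_true]
      obtain ⟨n, hn⟩ := exists_nat_ge |y| 
      exact ⟨n, by cases abs_le.mp hn with | intro h1 h2 => exact ⟨by linarith, h2⟩⟩
    have hmono : Monotone (fun n : ℕ => Set.Icc (-(n:ℝ)) n) := fun m n hmn =>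
      Set.Icc_subset_Icc (by exact_mod_cast neg_le_neg (Nat.cast_le.mpr hmn)) (by exact_mod_cast hmn)
    have htnd := tendsto_setIntegral_of_monotone (μ := volume) (f := fun y => (v y) ^ 2)
      (fun n : ℕ => measurableSet_Icc) hmono (by rw [hUnion]; exact hIsq.integrableOn)
    rw [hUnion] at htnd
    have hcompl : Tendsto (fun n : ℕ => ∫ y in (Set.Icc (-(n:ℝ)) n)ᶜ, (v y) ^ 2) atTop (nhds 0) := by
      have heq : ∀ n : ℕ, (∫ y in (Set.Icc (-(n:ℝ)) n)ᶜ, (v y) ^ 2) =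
          (∫ y, (v y) ^ 2) - ∫ y in Set.Icc (-(n:ℝ)) n, (v y) ^ 2 := by
        intro n
        have := integral_add_compl (measurableSet_Icc (a := (-(n:ℝ))) (b := (n:ℝ))) hIsq
        linarith
      simp only [heq]
      have := htnd.const_sub (∫ y, (v y) ^ 2)
      simpa using this
    have hev : ∀ᶠ n : ℕ in atTop, (∫ y in (Set.Icc (-(n:ℝ)) n)ᶜ, (v y) ^ 2) < ε :=
      hcompl.eventually_lt_const hε
    obtain ⟨n, hn⟩ := hev.exists
    have hK : IsCompact (Set.Icc (-(n:ℝ) - 1) n) := isCompact_Icc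
    refine eventually_of_mem (hK.compl_mem_cocompact) fun x hx => ?_
    have hsub : Set.Ioc x (x + 1) ⊆ (Set.Icc (-(n:ℝ)) n)ᶜ := by
      intro y hy
      simp only [Set.mem_compl_iff, Set.mem_Icc, not_and_or, not_le]
      simp only [Set.mem_compl_iff, Set.mem_Icc, not_and_or, not_le] at hx
      rcases hx with hx | hx
      · left; cases hy with | intro h1 h2 => linarith
      · right; cases hy with | intro h1 h2 => linarith
    calc (∫ y in Set.Ioc x (x + 1), (v y) ^ 2)
        ≤ ∫ y in (Set.Icc (-(n:ℝ)) n)ᶜ, (v y) ^ 2 := by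
          refine setIntegral_mono_set (hIsq.integrableOn)
            (Eventually.of_forall fun y => sq_nonneg _) hsub.eventuallyLE
      _ < ε := hn
  -- min(|v|,1) tends to zero
  have hmin : Tendsto (fun x => min |v x| 1) (cocompact ℝ) (nhds 0) := by
    rw [Metric.tendsto_nhds]
    intro ε hε
    have hδ : 0 < ε / 4 := by linarith
    have hδ2 : 0 < (ε / 4) ^ 2 := by positivity
    filter_upwards [hA.eventually_lt_const hδ, htail ((ε / 4) ^ 2) hδ2] with x hAx hTx
    have hBx : (∫ r in Set.Ioc (0:ℝ) 1, min |v (x + r)| 1) ≤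
        ε / 4 + (∫ r in Set.Ioc (0:ℝ) 1, (v (x + r)) ^ 2) / (ε / 4) := by
      have hle : (∫ r in Set.Ioc (0:ℝ) 1, min |v (x + r)| 1) ≤
          ∫ r in Set.Ioc (0:ℝ) 1, (ε / 4 + (v (x + r)) ^ 2 / (ε / 4)) :=
        integral_mono (hintB x) ((integrable_const _).add ((hintT x).div_const _))
          (fun r => min_abs_le_eps' hδ (v (x + r)))
      have heq : (∫ r in Set.Ioc (0:ℝ) 1, (ε / 4 + (v (x + r)) ^ 2 / (ε / 4))) =
          ε / 4 + (∫ r in Set.Ioc (0:ℝ) 1, (v (x + r)) ^ 2) / (ε / 4) := by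
        rw [integral_add (integrable_const _) ((hintT x).div_const _), setIntegral_const,
          integral_div, Real.volume_real_Ioc]
        norm_num [hμ0]
      linarith
    have hT' : (∫ r in Set.Ioc (0:ℝ) 1, (v (x + r)) ^ 2) < (ε / 4) ^ 2 := by
      rw [hTeq x]; exact hTx
    have hT'' : (∫ r in Set.Ioc (0:ℝ) 1, (v (x + r)) ^ 2) / (ε / 4) < ε / 4 := by
      rw [div_lt_iff₀ hδ]
      calc (∫ r in Set.Ioc (0:ℝ) 1, (v (x + r)) ^ 2) < (ε / 4) ^ 2 := hT'
        _ = ε / 4 * (ε / 4) := sq (ε/4) ▸ by ring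
    have hkey := key x
    have hmin_nonneg : (0:ℝ) ≤ min |v x| 1 := le_min (abs_nonneg _) zero_le_one
    rw [Real.dist_eq, sub_zero, abs_of_nonneg hmin_nonneg]
    linarith
  -- conclude
  have hev : (fun x => min |v x| 1) =ᶠ[cocompact ℝ] fun x => |v x| := by
    filter_upwards [hmin.eventually_lt_const (zero_lt_one)] with x hx
    by_cases h1 : |v x| ≤ 1
    · exact min_eq_left h1
    · exfalso
      rw [min_eq_right (le_of_not_ge h1)] at hx
      exact lt_irrefl _ hx
  exact hmin.congr' hev
end
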